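/- arXiv:2009.03702 — 4 statements merged into one kernel-verified Lean document; each statement's English description precedes it below -/
import Mathlib

section
/- Let ζ : (0,∞) → ℝ be continuous with bounded support and let k ∈ ℕ ∪ {0}. If ∫_0^∞ ζ(√(r² + t²)) r^k dr = 0 for every t > 0, then ζ(s) = 0 for every s > 0. -/
open Filter Topology MeasureTheory Set

noncomputable section

abbrev En (n : ℕ) : Type := EuclideanSpace ℝ (Fin n)

/-- Super-coercive, convex, lower semicontinuous, proper function on `ℝⁿ` with values in
`ℝ ∪ {+∞}` (modelled as `EReal`). -/
def IsConvSc {n : ℕ} (u : En n → EReal) : Prop :=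
  (∀ x y : En n, ∀ t : ℝ, 0 ≤ t → t ≤ 1 →
      u ((1 - t) • x + t • y) ≤ ((1 - t : ℝ) : EReal) * u x + ((t : ℝ) : EReal) * u y) ∧
  LowerSemicontinuous u ∧
  (∃ x, u x ≠ ⊤) ∧
  (∀ C : ℝ, ∃ R : ℝ, ∀ x : En n, R ≤ ‖x‖ → ((C * ‖x‖ : ℝ) : EReal) ≤ u x)

/-- Epi-convergence of a sequence of `EReal`-valued functions. -/
def EpiConvergesTo {n : ℕ} (uk : ℕ → En n → EReal) (u : En n → EReal) : Prop :=
  (∀ x : En n, ∀ xk : ℕ → En n, Tendsto xk atTop (𝓝 x) →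
      u x ≤ Filter.liminf (fun k => uk k (xk k)) atTop) ∧
  (∀ x : En n, ∃ xk : ℕ → En n, Tendsto xk atTop (𝓝 x) ∧
      Tendsto (fun k => uk k (xk k)) atTop (𝓝 (u x)))

/-- Sequential continuity of a functional on `Conv_sc(ℝⁿ)` with respect to epi-convergence. -/
def ContinuousValSc {n : ℕ} (Z : (En n → EReal) → ℝ) : Prop :=
  ∀ (uk : ℕ → En n → EReal) (u : En n → EReal),
    (∀ k, IsConvSc (uk k)) → IsConvSc u → EpiConvergesTo uk u →
      Tendsto (fun k => Z (uk k)) atTop (𝓝 (Z u))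

/-- Valuation property on `Conv_sc(ℝⁿ)`. -/
def IsValuationSc {n : ℕ} (Z : (En n → EReal) → ℝ) : Prop :=
  ∀ u v : En n → EReal, IsConvSc u → IsConvSc v → IsConvSc (u ⊔ v) → IsConvSc (u ⊓ v) →
    Z u + Z v = Z (u ⊔ v) + Z (u ⊓ v)

/-- Epi-translation invariance on `Conv_sc(ℝⁿ)`. -/
def EpiTranslInvSc {n : ℕ} (Z : (En n → EReal) → ℝ) : Prop :=
  ∀ u : En n → EReal, IsConvSc u → ∀ (x₀ : En n) (c : ℝ),
    Z (fun x => u (x - x₀) + (c : EReal)) = Z u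

/-- A rotation of `ℝⁿ`: a linear isometry with determinant one. -/
def IsRotation {n : ℕ} (ϑ : En n ≃ₗᵢ[ℝ] En n) : Prop :=
  LinearMap.det (ϑ.toLinearEquiv : En n →ₗ[ℝ] En n) = 1

/-- Rotation invariance on `Conv_sc(ℝⁿ)`. -/
def RotInvSc {n : ℕ} (Z : (En n → EReal) → ℝ) : Prop :=
  ∀ u : En n → EReal, IsConvSc u → ∀ ϑ : En n ≃ₗᵢ[ℝ] En n, IsRotation ϑ →
    Z (fun x => u (ϑ.symm x)) = Z u

/-- The Hessian matrix of `f : ℝⁿ → ℝ` at `x`. -/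
def hessMat {n : ℕ} (f : En n → ℝ) (x : En n) : Matrix (Fin n) (Fin n) ℝ :=
  Matrix.of fun i j =>
    fderiv ℝ (fun y => fderiv ℝ f y (EuclideanSpace.single j (1 : ℝ))) x
      (EuclideanSpace.single i (1 : ℝ))

/-- `[A]ₖ`, the `k`-th elementary symmetric function of the eigenvalues of an `n × n` matrix,
expressed via the characteristic polynomial; `[A]₀ = 1`. -/
def esymmMat {n : ℕ} (A : Matrix (Fin n) (Fin n) ℝ) (k : ℕ) : ℝ :=
  (-1 : ℝ) ^ k * (Matrix.charpoly A).coeff (n - k)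

/-- The class `Had_j^n` of singular densities. -/
def HadClass (n j : ℕ) (ζ : ℝ → ℝ) : Prop :=
  ContinuousOn ζ (Set.Ioi 0) ∧ (∃ R : ℝ, 0 < R ∧ ∀ s : ℝ, R ≤ s → ζ s = 0) ∧
  (if j = n then
      Tendsto ζ (𝓝[>] (0 : ℝ)) (𝓝 (ζ 0))
    else if j = 0 then
      ∃ L : ℝ, Tendsto (fun s : ℝ => ∫ t in Set.Ioi s, t ^ (n - 1) * ζ t) (𝓝[>] (0 : ℝ)) (𝓝 L)
    else
      Tendsto (fun s : ℝ => s ^ (n - j) * ζ s) (𝓝[>] (0 : ℝ)) (𝓝 0) ∧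
      ∃ L : ℝ, Tendsto (fun s : ℝ => ∫ t in Set.Ioi s, t ^ (n - j - 1) * ζ t)
        (𝓝[>] (0 : ℝ)) (𝓝 L))

/-- `Z(u) = ∫ ζ(|∇u|)[D²u]_{n-j} dx` on smooth strictly convex functions in `Conv_sc(ℝⁿ)`. -/
def HessFormulaSc {n : ℕ} (Z : (En n → EReal) → ℝ) (ζ : ℝ → ℝ) (j : ℕ) : Prop :=
  ∀ f : En n → ℝ, IsConvSc (fun x => (f x : EReal)) → ContDiff ℝ 2 f →
    (∀ x, (hessMat f x).PosDef) →
    Z (fun x => (f x : EReal)) = ∫ x : En n, ζ ‖gradient f x‖ * esymmMat (hessMat f x) (n - j)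

/-- Epi-multiplication `(λ ⌑ u)(x) = λ u(x/λ)`. -/
def epiSmul {n : ℕ} (lam : ℝ) (u : En n → EReal) : En n → EReal :=
  fun x => (lam : EReal) * u (lam⁻¹ • x)

/-- Sequential continuity of a functional on `Conv(ℝⁿ;ℝ)` with respect to uniform convergence
on compact sets. -/
def ContinuousValFin {n : ℕ} (Z : (En n → ℝ) → ℝ) : Prop :=
  ∀ (vk : ℕ → En n → ℝ) (v : En n → ℝ),
    (∀ k, ConvexOn ℝ Set.univ (vk k)) → ConvexOn ℝ Set.univ v →
    (∀ K : Set (En n), IsCompact K → TendstoUniformlyOn vk v atTop K) →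
      Tendsto (fun k => Z (vk k)) atTop (𝓝 (Z v))

/-- Valuation property on `Conv(ℝⁿ;ℝ)`. -/
def IsValuationFin {n : ℕ} (Z : (En n → ℝ) → ℝ) : Prop :=
  ∀ u v : En n → ℝ, ConvexOn ℝ Set.univ u → ConvexOn ℝ Set.univ v →
    ConvexOn ℝ Set.univ (u ⊔ v) → ConvexOn ℝ Set.univ (u ⊓ v) →
    Z u + Z v = Z (u ⊔ v) + Z (u ⊓ v)

/-- Dual epi-translation invariance: invariance under addition of linear functions and
constants. -/
def DualEpiTranslInv {n : ℕ} (Z : (En n → ℝ) → ℝ) : Prop :=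
  ∀ v : En n → ℝ, ConvexOn ℝ Set.univ v → ∀ (y : En n) (c : ℝ),
    Z (fun x => v x + (inner ℝ y x : ℝ) + c) = Z v

/-- Rotation invariance on `Conv(ℝⁿ;ℝ)`. -/
def RotInvFin {n : ℕ} (Z : (En n → ℝ) → ℝ) : Prop :=
  ∀ v : En n → ℝ, ConvexOn ℝ Set.univ v → ∀ ϑ : En n ≃ₗᵢ[ℝ] En n, IsRotation ϑ →
    Z (fun x => v (ϑ.symm x)) = Z v

/-- `Z(v) = ∫ ζ(|x|)[D²v]_j dx` on smooth strictly convex functions in `Conv(ℝⁿ;ℝ)`. -/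
def HessFormulaFin {n : ℕ} (Z : (En n → ℝ) → ℝ) (ζ : ℝ → ℝ) (j : ℕ) : Prop :=
  ∀ v : En n → ℝ, ConvexOn ℝ Set.univ v → ContDiff ℝ 2 v →
    (∀ x, (hessMat v x).PosDef) →
    Z v = ∫ x : En n, ζ ‖x‖ * esymmMat (hessMat v x) j

open Real

lemma aux_int_rpow {b : ℝ} (hb : -1 < b) (u v : ℝ) :
    IntegrableOn (fun w => (w - u) ^ b) (Set.Ioo u v) := by
  rcases le_or_gt v u with h | h
  · simp [Set.Ioo_eq_empty_of_le h]
  · have h1 : IntervalIntegrable (fun x : ℝ => x ^ b) volume 0 (v - u) :=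
      intervalIntegral.intervalIntegrable_rpow' hb
    have h2 := h1.comp_sub_right u
    rw [zero_add, sub_add_cancel] at h2
    have h3 := (intervalIntegrable_iff_integrableOn_Ioc_of_le h.le).mp h2
    exact h3.mono_set Set.Ioo_subset_Ioc_self

lemma aux_bound {g : ℝ → ℝ} (hg : ContinuousOn g (Set.Ioi 0)) {Mg : ℝ}
    (hMg : ∀ w, Mg ≤ w → g w = 0) {a : ℝ} (ha : 0 < a) :
    ∃ C, 0 ≤ C ∧ ∀ w, a ≤ w → |g w| ≤ C := by
  set N := max Mg (a + 1) with hN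
  have hsub : Set.Icc a N ⊆ Set.Ioi 0 := fun x hx => lt_of_lt_of_le ha hx.1
  obtain ⟨C, hC⟩ := (isCompact_Icc (a := a) (b := N)).exists_bound_of_continuousOn (hg.mono hsub)
  refine ⟨max C 0, le_max_right _ _, fun w hw => ?_⟩
  rcases le_or_gt w N with h | h
  · exact le_trans (hC w ⟨hw, h⟩) (le_max_left _ _)
  · rw [hMg w (le_trans (le_max_left _ _) h.le)]
    simp

lemma aux_integrableOn {g : ℝ → ℝ} {Mg : ℝ} (hg : ContinuousOn g (Set.Ioi 0))
    (hMg : ∀ w, Mg ≤ w → g w = 0) {a : ℝ} (ha : 0 < a) :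
    IntegrableOn g (Set.Ioi a) := by
  set N := max Mg (a + 1) with hN
  have haN : a ≤ N := le_trans (by linarith) (le_max_right _ _)
  rw [← Set.Ioc_union_Ioi_eq_Ioi haN, MeasureTheory.integrableOn_union]
  constructor
  · have hsub : Set.Icc a N ⊆ Set.Ioi 0 := fun x hx => lt_of_lt_of_le ha hx.1
    exact ((hg.mono hsub).integrableOn_compact isCompact_Icc).mono_set Set.Ioc_subset_Icc_self
  · have : EqOn g (fun _ => (0:ℝ)) (Set.Ioi N) := fun w hw =>
      hMg w (le_trans (le_max_left _ _) (le_of_lt hw))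
    rw [integrableOn_congr_fun this measurableSet_Ioi]
    exact integrableOn_zero

lemma aux_int_weighted {f : ℝ → ℝ} {M : ℝ} (hf : ContinuousOn f (Set.Ioi 0))
    (hM : ∀ w, M ≤ w → f w = 0) {c : ℝ} (hc : 0 < c) {b : ℝ} (hb : -1 < b) :
    IntegrableOn (fun w => f w * (w - c) ^ b) (Set.Ioi c) := by
  set N := max M (c + 1) with hN
  have hcN : c < N := lt_of_lt_of_le (by linarith) (le_max_right _ _)
  rw [← Set.Ioo_union_Ici_eq_Ioi hcN, MeasureTheory.integrableOn_union]
  obtain ⟨C, hC0, hC⟩ := aux_bound hf hM hc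
  constructor
  · have hmeas : AEStronglyMeasurable (fun w => f w * (w - c) ^ b)
        (volume.restrict (Set.Ioo c N)) := by
      apply ContinuousOn.aestronglyMeasurable _ measurableSet_Ioo
      apply ContinuousOn.mul
      · exact hf.mono (fun x hx => lt_trans hc hx.1)
      · apply ContinuousOn.rpow_const (continuousOn_id.sub continuousOn_const)
        intro x hx
        exact Or.inl (ne_of_gt (sub_pos.mpr hx.1))
    refine Integrable.mono' (((aux_int_rpow hb c N).const_mul C)) hmeas ?_
    rw [ae_restrict_iff' measurableSet_Ioo]
    filter_upwards with w hw
    rw [Real.norm_eq_abs, abs_mul, abs_of_nonneg (Real.rpow_nonneg (by linarith [hw.1]) b)]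
    exact mul_le_mul_of_nonneg_right (hC w (le_of_lt hw.1))
      (Real.rpow_nonneg (by linarith [hw.1]) b)
  · have : EqOn (fun w => f w * (w - c) ^ b) (fun _ => (0:ℝ)) (Set.Ici N) := by
      intro w hw
      simp [hM w (le_trans (le_max_left _ _) hw)]
    rw [integrableOn_congr_fun this measurableSet_Ici]
    exact integrableOn_zero

lemma aux_rpow_integral {b : ℝ} (hb : -1 < b) {c d : ℝ} (h : c ≤ d) :
    ∫ w in Set.Ioc c d, (w - c) ^ b = (d - c) ^ (b + 1) / (b + 1) := by
  rw [← intervalIntegral.integral_of_le h]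
  rw [intervalIntegral.integral_comp_sub_right (fun x => x ^ b) c]
  rw [integral_rpow (Or.inl hb)]
  rw [sub_self, Real.zero_rpow (by linarith)]
  ring

def betaC (a b : ℝ) : ℝ := ∫ x in Set.Ioo (0:ℝ) 1, x ^ a * (1 - x) ^ b

lemma betaC_integrable {a b : ℝ} (ha : -1 < a) (hb : -1 < b) :
    IntegrableOn (fun x => x ^ a * (1 - x) ^ b) (Set.Ioo (0:ℝ) 1) := by
  rw [← Set.Ioo_union_Ico_eq_Ioo (by norm_num : (0:ℝ) < 1/2) (by norm_num : (1/2:ℝ) ≤ 1),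
    MeasureTheory.integrableOn_union]
  constructor
  · set K := max 1 ((2⁻¹:ℝ) ^ b) with hK
    have hmeas : AEStronglyMeasurable (fun x : ℝ => x ^ a * (1 - x) ^ b)
        (volume.restrict (Set.Ioo (0:ℝ) (1/2))) := by
      apply ContinuousOn.aestronglyMeasurable _ measurableSet_Ioo
      apply ContinuousOn.mul
      · exact ContinuousOn.rpow_const continuousOn_id (fun x hx => Or.inl (ne_of_gt hx.1))
      · exact ContinuousOn.rpow_const (continuousOn_const.sub continuousOn_id)
          (fun x hx => Or.inl (by norm_num at hx ⊢; linarith [hx.2]))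
    have hdom : IntegrableOn (fun x : ℝ => K * (x - 0) ^ a) (Set.Ioo (0:ℝ) (1/2)) :=
      (aux_int_rpow ha 0 (1/2)).const_mul K
    refine Integrable.mono' hdom hmeas ?_
    rw [ae_restrict_iff' measurableSet_Ioo]
    filter_upwards with x hx
    rw [Real.norm_eq_abs, abs_mul, abs_of_nonneg (Real.rpow_nonneg hx.1.le a),
      abs_of_nonneg (Real.rpow_nonneg (by norm_num at hx ⊢; linarith [hx.2]) b), sub_zero,
      mul_comm K]
    apply mul_le_mul_of_nonneg_left _ (Real.rpow_nonneg hx.1.le a)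
    have hx2 : x < 1/2 := hx.2
    rcases le_or_gt 0 b with hb0 | hb0
    · refine le_trans (le_trans (Real.rpow_le_rpow (by linarith) (by linarith [hx.1]) hb0)
        (le_of_eq (Real.one_rpow b))) (le_max_left _ _)
    · refine le_trans ?_ (le_max_right _ _)
      exact Real.rpow_le_rpow_of_nonpos (by norm_num) (by norm_num; linarith) hb0.le
  · set K := max 1 ((2⁻¹:ℝ) ^ a) with hK
    have hmeas : AEStronglyMeasurable (fun x : ℝ => x ^ a * (1 - x) ^ b)
        (volume.restrict (Set.Ico (1/2:ℝ) 1)) := by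
      apply ContinuousOn.aestronglyMeasurable _ measurableSet_Ico
      apply ContinuousOn.mul
      · exact ContinuousOn.rpow_const continuousOn_id
          (fun x hx => Or.inl (by norm_num at hx ⊢; linarith [hx.1]))
      · exact ContinuousOn.rpow_const (continuousOn_const.sub continuousOn_id)
          (fun x hx => Or.inl (by norm_num at hx ⊢; linarith [hx.2]))
    have hdom : IntegrableOn (fun x : ℝ => K * (1 - x) ^ b) (Set.Ico (1/2:ℝ) 1) := by
      have h1 : IntervalIntegrable (fun x : ℝ => x ^ b) volume 0 (1/2) :=
        intervalIntegral.intervalIntegrable_rpow' hb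
      have h2 := (h1.comp_sub_left 1).symm
      norm_num at h2
      have h3 := (intervalIntegrable_iff_integrableOn_Ioc_of_le (by norm_num : (1/2:ℝ) ≤ 1)).mp h2
      have h4 : IntegrableOn (fun x : ℝ => (1 - x) ^ b) (Set.Ico (1/2:ℝ) 1) := by
        refine (((integrableOn_Icc_iff_integrableOn_Ioc (ha := enorm_ne_top)).mpr h3).mono_set Set.Ico_subset_Icc_self)
      exact h4.const_mul K
    refine Integrable.mono' hdom hmeas ?_
    rw [ae_restrict_iff' measurableSet_Ico]
    filter_upwards with x hx
    have hx1 : (1/2:ℝ) ≤ x := hx.1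
    have hx2 : x < 1 := hx.2
    rw [Real.norm_eq_abs, abs_mul, abs_of_nonneg (Real.rpow_nonneg (by linarith) a),
      abs_of_nonneg (Real.rpow_nonneg (by linarith) b), mul_comm K, mul_comm _ ((1-x)^b)]
    apply mul_le_mul_of_nonneg_left _ (Real.rpow_nonneg (by linarith) b)
    rcases le_or_gt 0 a with ha0 | ha0
    · refine le_trans (le_trans (Real.rpow_le_rpow (by linarith) hx2.le ha0)
        (le_of_eq (Real.one_rpow a))) (le_max_left _ _)
    · refine le_trans ?_ (le_max_right _ _)
      exact Real.rpow_le_rpow_of_nonpos (by norm_num) (by norm_num; linarith) ha0.le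

lemma betaC_pos {a b : ℝ} (ha : -1 < a) (hb : -1 < b) : 0 < betaC a b := by
  have h1 : (0:ℝ→ℝ) ≤ᵐ[volume.restrict (Set.Ioo (0:ℝ) 1)] fun x => x ^ a * (1 - x) ^ b := by
    rw [EventuallyLE, ae_restrict_iff' measurableSet_Ioo]
    filter_upwards with x hx
    exact mul_nonneg (Real.rpow_nonneg hx.1.le a) (Real.rpow_nonneg (by linarith [hx.2]) b)
  rw [betaC, setIntegral_pos_iff_support_of_nonneg_ae h1 (betaC_integrable ha hb)]
  have hsub : Set.Ioo (0:ℝ) 1 ⊆ Function.support fun x => x ^ a * (1 - x) ^ b := by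
    intro x hx
    exact ne_of_gt (mul_pos (Real.rpow_pos_of_pos hx.1 a)
      (Real.rpow_pos_of_pos (by linarith [hx.2]) b))
  rw [Set.inter_eq_self_of_subset_right hsub]
  simp [Real.volume_Ioo]

lemma aux_beta_eval {a b : ℝ} (ha : -1 < a) (hb : -1 < b) {u w : ℝ} (h : u < w) :
    ∫ c in Set.Ioo u w, (c - u) ^ a * (w - c) ^ b = (w - u) ^ (a + b + 1) * betaC a b := by
  set d := w - u with hd
  have hd0 : 0 < d := sub_pos.mpr h
  have e1 : ∫ c in Set.Ioo u w, (c - u) ^ a * (w - c) ^ b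
      = ∫ c in u..w, (c - u) ^ a * (w - c) ^ b := by
    rw [intervalIntegral.integral_of_le h.le, ← MeasureTheory.integral_Ioc_eq_integral_Ioo]
  have e2 : ∫ c in u..w, (c - u) ^ a * (w - c) ^ b
      = ∫ x in (0:ℝ)..d, x ^ a * (d - x) ^ b := by
    have e2a : ∀ c : ℝ, (c - u) ^ a * (w - c) ^ b
        = (fun x => x ^ a * (d - x) ^ b) (c - u) := by
      intro c
      have : d - (c - u) = w - c := by rw [hd]; ring
      simp only [this]
    rw [intervalIntegral.integral_congr (fun c _ => e2a c),
      intervalIntegral.integral_comp_sub_right (fun x => x ^ a * (d - x) ^ b) u, sub_self]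
  have e3 : ∫ x in (0:ℝ)..d, x ^ a * (d - x) ^ b
      = d * ∫ x in (0:ℝ)..1, (fun y => y ^ a * (d - y) ^ b) (x * d) := by
    rw [intervalIntegral.integral_comp_mul_right (fun y => y ^ a * (d - y) ^ b) hd0.ne']
    simp only [zero_mul, one_mul, smul_eq_mul]
    rw [← mul_assoc, mul_inv_cancel₀ hd0.ne', one_mul]
  have e4 : ∫ x in (0:ℝ)..1, (fun y => y ^ a * (d - y) ^ b) (x * d)
      = (d ^ a * d ^ b) * ∫ x in (0:ℝ)..1, x ^ a * (1 - x) ^ b := by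
    rw [← intervalIntegral.integral_const_mul]
    apply intervalIntegral.integral_congr
    intro x hx
    rw [Set.uIcc_of_le (by norm_num : (0:ℝ) ≤ 1)] at hx
    have hx0 : 0 ≤ x := hx.1
    have hx1 : x ≤ 1 := hx.2
    simp only
    have r1 : (x * d) ^ a = x ^ a * d ^ a := Real.mul_rpow hx0 hd0.le
    have r2 : d - x * d = d * (1 - x) := by ring
    have r3 : (d * (1 - x)) ^ b = d ^ b * (1 - x) ^ b := Real.mul_rpow hd0.le (by linarith)
    rw [r1, r2, r3]
    ring
  have e5 : ∫ x in (0:ℝ)..1, x ^ a * (1 - x) ^ b = betaC a b := by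
    rw [intervalIntegral.integral_of_le (by norm_num : (0:ℝ) ≤ 1),
      MeasureTheory.integral_Ioc_eq_integral_Ioo, betaC]
  rw [e1, e2, e3, e4, e5]
  rw [show d ^ (a + b + 1) = d * (d ^ a * d ^ b) by
    rw [Real.rpow_add hd0, Real.rpow_add hd0, Real.rpow_one]; ring]
  ring

lemma aux_split {f : ℝ → ℝ} {a x : ℝ} (hax : a ≤ x) (hi : IntegrableOn f (Set.Ioi a)) :
    ∫ w in Set.Ioi a, f w = (∫ w in Set.Ioc a x, f w) + ∫ w in Set.Ioi x, f w := by
  rw [← Set.Ioc_union_Ioi_eq_Ioi hax]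
  rw [MeasureTheory.setIntegral_union (Set.Ioc_disjoint_Ioi le_rfl) measurableSet_Ioi
    ((hi.mono_set (by rw [← Set.Ioc_union_Ioi_eq_Ioi hax]; exact Set.subset_union_left)))
    ((hi.mono_set (by rw [← Set.Ioc_union_Ioi_eq_Ioi hax]; exact Set.subset_union_right)))]

lemma aux_vanish {f : ℝ → ℝ} (hf : ContinuousOn f (Set.Ioi 0))
    (hi : ∀ a, 0 < a → IntegrableOn f (Set.Ioi a))
    (hz : ∀ u, 0 < u → ∫ w in Set.Ioi u, f w = 0) : ∀ u, 0 < u → f u = 0 := by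
  intro u hu
  set a := u / 2 with ha'
  have ha : 0 < a := by positivity
  have hau : a < u := by rw [ha']; linarith
  have hconst : ∀ x ∈ Set.Ioi a, (∫ t in a..x, f t) = 0 := by
    intro x hx
    rw [intervalIntegral.integral_of_le (le_of_lt hx)]
    have hsplit := aux_split (le_of_lt hx) (hi a ha)
    rw [hz a ha, hz x (lt_trans ha hx)] at hsplit
    linarith
  have hii : IntervalIntegrable f volume a u :=
    (intervalIntegrable_iff_integrableOn_Ioc_of_le hau.le).mpr
      ((hi a ha).mono_set Set.Ioc_subset_Ioi_self)
  have hmeas : StronglyMeasurableAtFilter f (𝓝 u) volume :=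
    ⟨Set.Ioi a, Ioi_mem_nhds hau,
      ((hf.mono (Set.Ioi_subset_Ioi ha.le)).aestronglyMeasurable measurableSet_Ioi)⟩
  have hder : HasDerivAt (fun x => ∫ t in a..x, f t) (f u) u :=
    intervalIntegral.integral_hasDerivAt_right hii hmeas
      (hf.continuousAt (Ioi_mem_nhds hu))
  have heq : (fun x => ∫ t in a..x, f t) =ᶠ[𝓝 u] fun _ => (0:ℝ) := by
    filter_upwards [Ioi_mem_nhds hau] with x hx
    exact hconst x hx
  have hder0 : HasDerivAt (fun x => ∫ t in a..x, f t) 0 u :=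
    (hasDerivAt_const u (0:ℝ)).congr_of_eventuallyEq heq
  exact hder.unique hder0

lemma aux_cont0 {f : ℝ → ℝ} (hf : ContinuousOn f (Set.Ioi 0))
    (hi : ∀ a, 0 < a → IntegrableOn f (Set.Ioi a)) :
    ContinuousOn (fun x => ∫ w in Set.Ioi x, f w) (Set.Ioi 0) := by
  intro u hu
  apply ContinuousAt.continuousWithinAt
  have hu0 : 0 < u := hu
  set a := u / 2 with ha'
  have ha : 0 < a := by positivity
  have hau : a < u := by rw [ha']; linarith
  have heq : (fun x => ∫ w in Set.Ioi x, f w)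
      =ᶠ[𝓝 u] fun x => (∫ w in Set.Ioi a, f w) - ∫ t in a..x, f t := by
    filter_upwards [Ioi_mem_nhds hau] with x hx
    rw [intervalIntegral.integral_of_le (le_of_lt hx)]
    have := aux_split (le_of_lt hx) (hi a ha)
    linarith
  rw [continuousAt_congr heq]
  apply ContinuousAt.sub continuousAt_const
  have hii : IntervalIntegrable f volume a u :=
    (intervalIntegrable_iff_integrableOn_Ioc_of_le hau.le).mpr
      ((hi a ha).mono_set Set.Ioc_subset_Ioi_self)
  have hmeas : StronglyMeasurableAtFilter f (𝓝 u) volume :=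
    ⟨Set.Ioi a, Ioi_mem_nhds hau,
      ((hf.mono (Set.Ioi_subset_Ioi ha.le)).aestronglyMeasurable measurableSet_Ioi)⟩
  exact (intervalIntegral.integral_hasDerivAt_right hii hmeas
    (hf.continuousAt (Ioi_mem_nhds hu))).continuousAt

lemma aux_contQ {f : ℝ → ℝ} {M : ℝ} (hf : ContinuousOn f (Set.Ioi 0))
    (hM : ∀ w, M ≤ w → f w = 0) {m : ℕ} (hm : 1 ≤ m) :
    ContinuousOn (fun u => ∫ w in Set.Ioi u, f w * (w - u) ^ (m:ℝ)) (Set.Ioi 0) := by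
  have hm0 : (0:ℝ) < (m:ℝ) := by exact_mod_cast hm
  have hrc : Continuous (fun x : ℝ => x ^ (m:ℝ)) := by
    rw [continuous_iff_continuousAt]
    intro x
    exact Real.continuousAt_rpow_const x _ (Or.inr hm0.le)
  intro u₀ hu₀
  apply ContinuousAt.continuousWithinAt
  have hu0 : 0 < u₀ := hu₀
  set a := u₀ / 2 with ha'
  have ha : 0 < a := by positivity
  have hau : a < u₀ := by rw [ha']; linarith
  set N := max M (u₀ + 1) with hN'
  have hN1 : u₀ + 1 ≤ N := le_max_right _ _
  set G : ℝ → ℝ → ℝ := fun u w => f w * (max (w - u) 0) ^ (m:ℝ) with hG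
  have hGcont : ∀ u, ContinuousOn (fun w => G u w) (Set.Ioi 0) := fun u =>
    hf.mul ((hrc.comp ((continuous_id.sub continuous_const).max continuous_const)).continuousOn)
  have hGsupp : ∀ u w, N ≤ w → G u w = 0 := fun u w hw => by
    simp [hG, hM w (le_trans (le_max_left _ _) hw)]
  have hQeq : ∀ u, a < u → (∫ w in Set.Ioi u, f w * (w - u) ^ (m:ℝ))
      = ∫ w in Set.Ioi a, G u w := by
    intro u hu
    have hiG : IntegrableOn (fun w => G u w) (Set.Ioi a) :=
      aux_integrableOn (hGcont u) (hGsupp u) ha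
    rw [aux_split hu.le hiG]
    have h1 : ∫ w in Set.Ioc a u, G u w = 0 := by
      have heq0 : EqOn (fun w => G u w) (fun _ => (0:ℝ)) (Set.Ioc a u) := by
        intro w hw
        simp only [hG]
        rw [max_eq_right (sub_nonpos.mpr hw.2), Real.zero_rpow (ne_of_gt hm0), mul_zero]
      rw [setIntegral_congr_fun measurableSet_Ioc heq0, integral_zero]
    have h2 : ∫ w in Set.Ioi u, G u w = ∫ w in Set.Ioi u, f w * (w - u) ^ (m:ℝ) := by
      apply setIntegral_congr_fun measurableSet_Ioi
      intro w hw
      simp only [hG]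
      rw [max_eq_left (sub_nonneg.mpr (le_of_lt hw))]
    rw [h1, h2, zero_add]
  have hcont2 : ContinuousAt (fun u => ∫ w in Set.Ioi a, G u w) u₀ := by
    apply MeasureTheory.continuousAt_of_dominated
      (bound := fun w => |f w| * (N - a) ^ (m:ℝ))
    · filter_upwards with u
      exact ((hGcont u).mono (fun x hx => lt_trans ha hx)).aestronglyMeasurable measurableSet_Ioi
    · filter_upwards [Ioo_mem_nhds hau (lt_add_one u₀)] with u hu
      filter_upwards with w
      by_cases hwN : N ≤ w
      · rw [hGsupp u w hwN, hM w (le_trans (le_max_left _ _) hwN)]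
        simp [Real.rpow_nonneg (by linarith [hu.1] : (0:ℝ) ≤ N - a)]
      · push_neg at hwN
        simp only [hG, Real.norm_eq_abs, abs_mul]
        rw [abs_of_nonneg (Real.rpow_nonneg (le_max_right _ _) _)]
        apply mul_le_mul_of_nonneg_left _ (abs_nonneg _)
        apply Real.rpow_le_rpow (le_max_right _ _) _ hm0.le
        have h1 : a < u := hu.1
        exact max_le (by linarith) (by linarith)
    · exact ((aux_integrableOn hf hM ha).norm).mul_const _
    · filter_upwards with w
      exact (continuous_const.mul
        (hrc.comp ((continuous_const.sub continuous_id).max continuous_const))).continuousAt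
  have hev : (fun u => ∫ w in Set.Ioi u, f w * (w - u) ^ (m:ℝ))
      =ᶠ[𝓝 u₀] fun u => ∫ w in Set.Ioi a, G u w := by
    filter_upwards [Ioi_mem_nhds hau] with u hu using hQeq u hu
  rw [continuousAt_congr hev]
  exact hcont2

lemma aux_int_rpow' {b : ℝ} (hb : -1 < b) {u v : ℝ} (h : u ≤ v) :
    IntegrableOn (fun w => (w - u) ^ b) (Set.Ioc u v) := by
  have h1 : IntervalIntegrable (fun x : ℝ => x ^ b) volume 0 (v - u) :=
    intervalIntegral.intervalIntegrable_rpow' hb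
  have h2 := h1.comp_sub_right u
  rw [zero_add, sub_add_cancel] at h2
  exact (intervalIntegrable_iff_integrableOn_Ioc_of_le h).mp h2

lemma aux_swap {f : ℝ → ℝ} {M : ℝ} (hf : ContinuousOn f (Set.Ioi 0))
    (hM : ∀ w, M ≤ w → f w = 0) {u a b : ℝ} (hu : 0 < u) (ha : -1 < a) (hb : -1 < b) :
    ∫ c in Set.Ioi u, (c - u) ^ a * (∫ w in Set.Ioi c, f w * (w - c) ^ b)
      = ∫ w in Set.Ioi u, f w * ((w - u) ^ (a + b + 1) * betaC a b) := by
  have hb1 : (0:ℝ) < b + 1 := by linarith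
  set μ := volume.restrict (Set.Ioi u) with hμ
  set Φ : ℝ → ℝ → ℝ := fun c w => if c < w then (c - u) ^ a * (f w * (w - c) ^ b) else 0 with hΦ
  obtain ⟨C, hC0, hC⟩ := aux_bound hf hM hu
  set N := max M (u + 1) with hN'
  have huN : u < N := lt_of_lt_of_le (lt_add_one u) (le_max_right _ _)
  have hMN : M ≤ N := le_max_left _ _
  have hS : MeasurableSet {p : ℝ × ℝ | p.1 < p.2} := measurableSet_lt measurable_fst measurable_snd
  have hindc : ∀ c, Φ c = Set.indicator (Set.Ioi c)
      (fun w => (c - u) ^ a * (f w * (w - c) ^ b)) := by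
    intro c
    funext w
    by_cases h : c < w <;> simp [hΦ, h, Set.indicator_apply, Set.mem_Ioi]
  -- measurability on the product
  have hmeas : AEStronglyMeasurable (Function.uncurry Φ) (μ.prod μ) := by
    have hind : Function.uncurry Φ = Set.indicator {p : ℝ × ℝ | p.1 < p.2}
        (fun p => (p.1 - u) ^ a * (f p.2 * (p.2 - p.1) ^ b)) := by
      funext p
      by_cases h : p.1 < p.2 <;>
        simp [hΦ, h, Function.uncurry, Set.indicator_apply, Set.mem_setOf_eq]
    rw [hind, hμ, Measure.prod_restrict, aestronglyMeasurable_indicator_iff hS,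
      Measure.restrict_restrict hS]
    apply ContinuousOn.aestronglyMeasurable _ (hS.inter (measurableSet_Ioi.prod measurableSet_Ioi))
    apply ContinuousOn.mul
    · apply ContinuousOn.rpow_const (continuous_fst.continuousOn.sub continuousOn_const)
      rintro p ⟨hp1, hp2, -⟩
      exact Or.inl (ne_of_gt (sub_pos.mpr hp2))
    · apply ContinuousOn.mul
      · apply hf.comp continuous_snd.continuousOn
        rintro p ⟨hp1, hp2, -⟩
        exact lt_trans (lt_trans hu hp2) hp1
      · apply ContinuousOn.rpow_const (continuous_snd.continuousOn.sub continuous_fst.continuousOn)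
        rintro p ⟨hp1, -, -⟩
        exact Or.inl (ne_of_gt (sub_pos.mpr hp1))
  -- integrability of slices
  have hslice : ∀ c, u < c → Integrable (Φ c) μ := by
    intro c hc
    rw [hindc c, hμ, integrable_indicator_iff measurableSet_Ioi, IntegrableOn,
      Measure.restrict_restrict measurableSet_Ioi,
      Set.inter_eq_self_of_subset_left (Set.Ioi_subset_Ioi hc.le)]
    exact (aux_int_weighted hf hM (lt_trans hu hc) hb).const_mul _
  -- bound for the norm integrals
  set D := C * ((N - u) ^ (b + 1) / (b + 1)) with hD'
  have hD0 : 0 ≤ D := mul_nonneg hC0 (div_nonneg (Real.rpow_nonneg (by linarith) _) hb1.le)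
  have hnormint : ∀ c, u < c → (∫ w, ‖Φ c w‖ ∂μ)
      ≤ Set.indicator (Set.Ioo u N) (fun c => (c - u) ^ a * D) c := by
    intro c hc
    by_cases hcN : c < N
    · rw [Set.indicator_of_mem (Set.mem_Ioo.mpr ⟨hc, hcN⟩)]
      have hidom : Integrable (Set.indicator (Set.Ioc c N)
          (fun w => (c - u) ^ a * (C * (w - c) ^ b))) μ := by
        rw [hμ, integrable_indicator_iff measurableSet_Ioc, IntegrableOn,
          Measure.restrict_restrict measurableSet_Ioc,
          Set.inter_eq_self_of_subset_left
            (subset_trans Set.Ioc_subset_Ioi_self (Set.Ioi_subset_Ioi hc.le))]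
        exact (((aux_int_rpow' hb hcN.le).const_mul C).const_mul _)
      have hptw : ∀ w, ‖Φ c w‖ ≤ Set.indicator (Set.Ioc c N)
          (fun w => (c - u) ^ a * (C * (w - c) ^ b)) w := by
        intro w
        by_cases h : c < w
        · by_cases h2 : w ≤ N
          · rw [Set.indicator_of_mem (Set.mem_Ioc.mpr ⟨h, h2⟩)]
            simp only [hΦ, if_pos h, Real.norm_eq_abs, abs_mul]
            rw [abs_of_nonneg (Real.rpow_nonneg (by linarith [hc] : (0:ℝ) ≤ c - u) a),
              abs_of_nonneg (Real.rpow_nonneg (by linarith : (0:ℝ) ≤ w - c) b)]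
            apply mul_le_mul_of_nonneg_left _ (Real.rpow_nonneg (by linarith) a)
            exact mul_le_mul_of_nonneg_right (hC w (by linarith [hu])) (Real.rpow_nonneg (by linarith) b)
          · push_neg at h2
            rw [Set.indicator_of_notMem (fun hmem => absurd (Set.mem_Ioc.mp hmem).2 (not_le.mpr h2))]
            simp only [hΦ, if_pos h, Real.norm_eq_abs]
            rw [hM w (by linarith)]
            simp
        · rw [Set.indicator_of_notMem (fun hmem => absurd (Set.mem_Ioc.mp hmem).1 h)]
          simp [hΦ, if_neg h]
      calc (∫ w, ‖Φ c w‖ ∂μ)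
          ≤ ∫ w, Set.indicator (Set.Ioc c N) (fun w => (c - u) ^ a * (C * (w - c) ^ b)) w ∂μ :=
            integral_mono ((hslice c hc).norm) hidom hptw
        _ = ∫ w in Set.Ioc c N, (c - u) ^ a * (C * (w - c) ^ b) := by
            rw [hμ, integral_indicator measurableSet_Ioc,
              Measure.restrict_restrict measurableSet_Ioc,
              Set.inter_eq_self_of_subset_left
                (subset_trans Set.Ioc_subset_Ioi_self (Set.Ioi_subset_Ioi hc.le))]
        _ = (c - u) ^ a * (C * ((N - c) ^ (b + 1) / (b + 1))) := by
            rw [MeasureTheory.integral_const_mul, MeasureTheory.integral_const_mul,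
              aux_rpow_integral hb hcN.le]
        _ ≤ (c - u) ^ a * D := by
            apply mul_le_mul_of_nonneg_left _ (Real.rpow_nonneg (by linarith [hc]) a)
            rw [hD']
            apply mul_le_mul_of_nonneg_left _ hC0
            exact (div_le_div_iff_of_pos_right hb1).mpr
              (Real.rpow_le_rpow (by linarith) (by linarith) hb1.le)
    · push_neg at hcN
      have hzero : Φ c = fun _ => (0:ℝ) := by
        funext w
        by_cases h : c < w
        · simp [hΦ, if_pos h, hM w (le_trans hMN (le_trans hcN h.le))]
        · simp [hΦ, if_neg h]
      rw [Set.indicator_of_notMem (fun hmem => absurd (Set.mem_Ioo.mp hmem).2 (not_lt.mpr hcN)), hzero]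
      simp
  have hbound_int : Integrable (Set.indicator (Set.Ioo u N) (fun c => (c - u) ^ a * D)) μ := by
    rw [hμ, integrable_indicator_iff measurableSet_Ioo, IntegrableOn,
      Measure.restrict_restrict measurableSet_Ioo,
      Set.inter_eq_self_of_subset_left (fun x hx => hx.1)]
    exact (aux_int_rpow ha u N).mul_const D
  -- integrability on the product
  have hint : Integrable (Function.uncurry Φ) (μ.prod μ) := by
    rw [MeasureTheory.integrable_prod_iff hmeas]
    constructor
    · rw [hμ, ae_restrict_iff' measurableSet_Ioi]
      filter_upwards with c hc
      exact hslice c hc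
    · apply Integrable.mono' hbound_int hmeas.norm.integral_prod_right'
      rw [hμ, ae_restrict_iff' measurableSet_Ioi]
      filter_upwards with c hc
      rw [Real.norm_eq_abs, abs_of_nonneg (integral_nonneg (fun w => norm_nonneg _))]
      exact hnormint c hc
  have hswap := MeasureTheory.integral_integral_swap hint
  have hLHS : ∫ c in Set.Ioi u, (c - u) ^ a * (∫ w in Set.Ioi c, f w * (w - c) ^ b)
      = ∫ c, (∫ w, Φ c w ∂μ) ∂μ := by
    rw [hμ]
    apply setIntegral_congr_fun measurableSet_Ioi
    intro c hc
    dsimp only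
    rw [hindc c, integral_indicator measurableSet_Ioi,
      Measure.restrict_restrict measurableSet_Ioi,
      Set.inter_eq_self_of_subset_left (Set.Ioi_subset_Ioi (le_of_lt hc))]
    rw [MeasureTheory.integral_const_mul]
  have hRHS : ∫ w, (∫ c, Φ c w ∂μ) ∂μ
      = ∫ w in Set.Ioi u, f w * ((w - u) ^ (a + b + 1) * betaC a b) := by
    rw [hμ]
    apply setIntegral_congr_fun measurableSet_Ioi
    intro w hw
    dsimp only
    have hind : (fun c => Φ c w) = Set.indicator (Set.Iio w)
        (fun c => (c - u) ^ a * (f w * (w - c) ^ b)) := by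
      funext c
      by_cases h : c < w <;> simp [hΦ, h, Set.indicator_apply, Set.mem_Iio]
    rw [hind, integral_indicator measurableSet_Iio,
      Measure.restrict_restrict measurableSet_Iio, Set.Iio_inter_Ioi]
    have hcongr : EqOn (fun c => (c - u) ^ a * (f w * (w - c) ^ b))
        (fun c => f w * ((c - u) ^ a * (w - c) ^ b)) (Set.Ioo u w) := by
      intro c hc
      simp only
      ring
    rw [setIntegral_congr_fun measurableSet_Ioo hcongr, MeasureTheory.integral_const_mul,
      aux_beta_eval ha hb hw]
  rw [hLHS, hswap, hRHS]

lemma aux_subst {ζ : ℝ → ℝ} {F : ℝ → ℝ} (hFdef : ∀ w, 0 < w → F w = ζ (Real.sqrt w))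
    {k : ℕ} {t : ℝ} (ht : 0 < t)
    (h : ∫ r in Set.Ioi (0 : ℝ), ζ (Real.sqrt (r ^ 2 + t ^ 2)) * r ^ k = 0) :
    ∫ w in Set.Ioi (t ^ 2), F w * (w - t ^ 2) ^ (((k:ℝ) - 1) / 2) = 0 := by
  set α := ((k:ℝ) - 1) / 2 with hα
  set c := t ^ 2 with hc
  have hc0 : 0 < c := by positivity
  have htr : ∫ w in Set.Ioi c, F w * (w - c) ^ α
      = ∫ v in Set.Ioi 0, F (v + c) * v ^ α := by
    have h2 := (measurePreserving_add_right volume c).setIntegral_preimage_emb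
      (measurableEmbedding_addRight c) (fun w => F w * (w - c) ^ α) (Set.Ioi c)
    rw [← h2]
    have hpre : (fun x : ℝ => x + c) ⁻¹' Set.Ioi c = Set.Ioi 0 := by
      ext v; simp
    rw [hpre]
    simp
  have hsub : ∫ v in Set.Ioi (0:ℝ), F (v + c) * v ^ α
      = ∫ x in Set.Ioi (0:ℝ),
        (|(2:ℝ)| * x ^ ((2:ℝ) - 1)) • (F (x ^ (2:ℝ) + c) * (x ^ (2:ℝ)) ^ α) :=
    (MeasureTheory.integral_comp_rpow_Ioi (fun v => F (v + c) * v ^ α)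
      (p := 2) two_ne_zero).symm
  have heq : EqOn
      (fun x : ℝ => (|(2:ℝ)| * x ^ ((2:ℝ) - 1)) • (F (x ^ (2:ℝ) + c) * (x ^ (2:ℝ)) ^ α))
      (fun x : ℝ => 2 * (ζ (Real.sqrt (x ^ 2 + t ^ 2)) * x ^ k)) (Set.Ioi 0) := by
    intro x hx
    have hx0 : 0 < x := hx
    simp only [smul_eq_mul]
    have h4 : (x ^ (2:ℝ)) ^ α = x ^ ((k:ℝ) - 1) := by
      rw [← Real.rpow_mul hx0.le]
      congr 1
      rw [hα]; ring
    have h1 : x ^ ((2:ℝ)) = x ^ 2 := by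
      rw [show ((2:ℝ)) = ((2:ℕ):ℝ) by norm_num, Real.rpow_natCast]
    have h3 : F (x ^ 2 + c) = ζ (Real.sqrt (x ^ 2 + t ^ 2)) := by
      rw [hFdef _ (by positivity), hc]
    have h2 : x ^ ((2:ℝ) - 1) = x := by
      rw [show (2:ℝ) - 1 = 1 by norm_num, Real.rpow_one]
    have h5 : x * x ^ ((k:ℝ) - 1) = x ^ k := by
      nth_rewrite 1 [← Real.rpow_one x]
      rw [← Real.rpow_natCast x k, ← Real.rpow_add hx0]
      congr 1
      ring
    rw [h4, h1, h3, h2, abs_of_nonneg (by norm_num : (0:ℝ) ≤ 2), ← h5]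
    ring
  rw [htr, hsub, setIntegral_congr_fun measurableSet_Ioi heq,
    MeasureTheory.integral_const_mul, h, mul_zero]

/-- Injectivity of the (generalized) Abel transform. -/
theorem stmt10 (ζ : ℝ → ℝ) (hcont : ContinuousOn ζ (Set.Ioi 0))
    (hsupp : ∃ R : ℝ, 0 < R ∧ ∀ s : ℝ, R ≤ s → ζ s = 0) (k : ℕ)
    (h : ∀ t : ℝ, 0 < t → ∫ r in Set.Ioi (0 : ℝ), ζ (Real.sqrt (r ^ 2 + t ^ 2)) * r ^ k = 0) :
    ∀ s : ℝ, 0 < s → ζ s = 0 := by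
  obtain ⟨R, hR0, hRz⟩ := hsupp
  set F : ℝ → ℝ := fun w => if 0 < w then ζ (Real.sqrt w) else 0 with hF'
  have hFdef : ∀ w, 0 < w → F w = ζ (Real.sqrt w) := fun w hw => by simp [hF', hw]
  set M := R ^ 2 with hM'
  have hM0 : 0 < M := by positivity
  have hFM : ∀ w, M ≤ w → F w = 0 := by
    intro w hw
    have hw0 : 0 < w := lt_of_lt_of_le hM0 hw
    rw [hFdef w hw0]
    apply hRz
    calc R = Real.sqrt (R ^ 2) := (Real.sqrt_sq hR0.le).symm
      _ ≤ Real.sqrt w := Real.sqrt_le_sqrt hw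
  have hFc : ContinuousOn F (Set.Ioi 0) := by
    apply ContinuousOn.congr
      (hcont.comp Real.continuous_sqrt.continuousOn
        (fun w hw => Real.sqrt_pos.mpr hw))
    intro w hw
    exact hFdef w hw
  set α := ((k:ℝ) - 1) / 2 with hα'
  have hk0 : (0:ℝ) ≤ (k:ℝ) := Nat.cast_nonneg k
  have hα1 : -1 < α := by rw [hα']; linarith
  -- Step A: the fractional-order moments vanish
  have hH : ∀ c, 0 < c → ∫ w in Set.Ioi c, F w * (w - c) ^ α = 0 := by
    intro c hc
    have ht : 0 < Real.sqrt c := Real.sqrt_pos.mpr hc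
    have h2 := aux_subst hFdef ht (h _ ht)
    rwa [Real.sq_sqrt hc.le] at h2
  -- support and continuity of the moment functions
  have hQsupp : ∀ (b : ℝ), ∀ c, M ≤ c → (∫ w in Set.Ioi c, F w * (w - c) ^ b) = 0 := by
    intro b c hc
    have heq0 : EqOn (fun w => F w * (w - c) ^ b) (fun _ => (0:ℝ)) (Set.Ioi c) := by
      intro w hw
      simp [hFM w (le_trans hc (le_of_lt hw))]
    rw [setIntegral_congr_fun measurableSet_Ioi heq0, integral_zero]
  -- Step B : Q k = 0
  have base : ∀ u, 0 < u → ∫ w in Set.Ioi u, F w * (w - u) ^ ((k:ℝ)) = 0 := by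
    intro u hu
    have hswapk := aux_swap hFc hFM hu hα1 hα1
    have hL0 : ∫ c in Set.Ioi u, (c - u) ^ α * (∫ w in Set.Ioi c, F w * (w - c) ^ α) = 0 := by
      have heq0 : EqOn (fun c => (c - u) ^ α * (∫ w in Set.Ioi c, F w * (w - c) ^ α))
          (fun _ => (0:ℝ)) (Set.Ioi u) := by
        intro c hc
        simp [hH c (lt_trans hu hc)]
      rw [setIntegral_congr_fun measurableSet_Ioi heq0, integral_zero]
    rw [hL0] at hswapk
    have hconv : ∫ w in Set.Ioi u, F w * ((w - u) ^ (α + α + 1) * betaC α α)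
        = betaC α α * ∫ w in Set.Ioi u, F w * (w - u) ^ ((k:ℝ)) := by
      rw [← MeasureTheory.integral_const_mul]
      apply setIntegral_congr_fun measurableSet_Ioi
      intro w _
      simp only
      rw [show α + α + 1 = (k:ℝ) by rw [hα']; ring]
      ring
    rw [hconv] at hswapk
    rcases mul_eq_zero.mp hswapk.symm with h0 | h0
    · exact absurd h0 (ne_of_gt (betaC_pos hα1 hα1))
    · exact h0
  -- Step C : downward induction
  have step : ∀ m : ℕ, (∀ u, 0 < u → ∫ w in Set.Ioi u, F w * (w - u) ^ (((m+1:ℕ)):ℝ) = 0) →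
      ∀ u, 0 < u → ∫ w in Set.Ioi u, F w * (w - u) ^ ((m:ℝ)) = 0 := by
    intro m hP
    have hm1 : (-1:ℝ) < (m:ℝ) := by
      have : (0:ℝ) ≤ (m:ℝ) := Nat.cast_nonneg m
      linarith
    set Qm : ℝ → ℝ := fun c => ∫ w in Set.Ioi c, F w * (w - c) ^ ((m:ℝ)) with hQm'
    have hQz : ∀ u, 0 < u → ∫ c in Set.Ioi u, Qm c = 0 := by
      intro u hu
      have hsw := aux_swap hFc hFM hu (by norm_num : (-1:ℝ) < 0) hm1
      have hL : ∫ c in Set.Ioi u, (c - u) ^ (0:ℝ) * (∫ w in Set.Ioi c, F w * (w - c) ^ ((m:ℝ)))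
          = ∫ c in Set.Ioi u, Qm c := by
        apply setIntegral_congr_fun measurableSet_Ioi
        intro c _
        simp [hQm', Real.rpow_zero]
      have hR : ∫ w in Set.Ioi u, F w * ((w - u) ^ ((0:ℝ) + (m:ℝ) + 1) * betaC 0 (m:ℝ)) = 0 := by
        have hconv : ∫ w in Set.Ioi u, F w * ((w - u) ^ ((0:ℝ) + (m:ℝ) + 1) * betaC 0 (m:ℝ))
            = betaC 0 (m:ℝ) * ∫ w in Set.Ioi u, F w * (w - u) ^ (((m+1:ℕ)):ℝ) := by
          rw [← MeasureTheory.integral_const_mul]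
          apply setIntegral_congr_fun measurableSet_Ioi
          intro w _
          simp only
          rw [show (0:ℝ) + (m:ℝ) + 1 = (((m+1:ℕ)):ℝ) by push_cast; ring]
          ring
        rw [hconv, hP u hu, mul_zero]
      rw [← hL, hsw, hR]
    have hQcont : ContinuousOn Qm (Set.Ioi 0) := by
      rcases Nat.eq_zero_or_pos m with hm | hm
      · subst hm
        have he : EqOn (fun c => ∫ w in Set.Ioi c, F w) Qm (Set.Ioi 0) := by
          intro c _
          simp [hQm', Real.rpow_zero]
        exact ContinuousOn.congr (aux_cont0 hFc (fun a ha => aux_integrableOn hFc hFM ha)) he.symm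
      · exact aux_contQ hFc hFM hm
    have hQM : ∀ c, M ≤ c → Qm c = 0 := fun c hc => hQsupp _ c hc
    have hQint : ∀ a, 0 < a → IntegrableOn Qm (Set.Ioi a) :=
      fun a ha => aux_integrableOn hQcont hQM ha
    exact aux_vanish hQcont hQint hQz
  have hall : ∀ j m : ℕ, m + j = k →
      ∀ u, 0 < u → ∫ w in Set.Ioi u, F w * (w - u) ^ ((m:ℝ)) = 0 := by
    intro j
    induction j with
    | zero => intro m hm; rw [Nat.add_zero] at hm; subst hm; exact base
    | succ j ih =>
      intro m hm
      exact step m (ih (m + 1) (by omega))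
  have hQ0 : ∀ u, 0 < u → ∫ w in Set.Ioi u, F w = 0 := by
    intro u hu
    have h2 := hall k 0 (by omega) u hu
    simpa [Real.rpow_zero] using h2
  have hF0 : ∀ u, 0 < u → F u = 0 :=
    aux_vanish hFc (fun a ha => aux_integrableOn hFc hFM ha) hQ0
  intro s hs
  have := hF0 (s ^ 2) (by positivity)
  rwa [hFdef _ (by positivity), Real.sqrt_sq hs.le] at this
end
end

section
/- Let n ≥ 1, let j ∈ {1,…,n} and let ζ ∈ Had_j^n. If v : ℝⁿ → ℝ is convex and twice continuously differentiable, then the function x ↦ ζ(|x|) [D²v(x)]_j is Lebesgue integrable on ℝⁿ. -/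
open Filter Topology MeasureTheory Set

noncomputable section

section Stmt12Aux

open Metric Module

lemma stmt12_cont_charpoly_coeff (n m : ℕ) :
    Continuous fun A : Matrix (Fin n) (Fin n) ℝ => (Matrix.charpoly A).coeff m := by
  have key : ∀ A : Matrix (Fin n) (Fin n) ℝ,
      (Matrix.charpoly A).coeff m =
        MvPolynomial.eval (fun p : Fin n × Fin n => A p.1 p.2)
          ((Matrix.charpoly.univ ℝ (Fin n)).coeff m) := by
    intro A
    have h := Matrix.charpoly.univ_map_eval₂Hom (Fin n) (RingHom.id ℝ)
      (fun p : Fin n × Fin n => A p.1 p.2)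
    have hA : Matrix.of (Function.curry fun p : Fin n × Fin n => A p.1 p.2) = A := by
      ext i j; rfl
    rw [hA] at h
    have h2 := congrArg (fun p => Polynomial.coeff p m) h
    simp only [Polynomial.coeff_map] at h2
    rw [← h2]
    rfl
  simp only [key]
  exact (MvPolynomial.continuous_eval _).comp
    (continuous_pi fun p => (continuous_apply p.2).comp (continuous_apply p.1))

lemma stmt12_cont_hess {n : ℕ} (v : En n → ℝ) (hs : ContDiff ℝ 2 v) :
    Continuous fun x => hessMat v x := by
  have h1 : ContDiff ℝ 1 (fun y => fderiv ℝ v y) :=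
    hs.fderiv_right (by norm_num)
  refine continuous_matrix fun i j => ?_
  have h2 : ContDiff ℝ 1 (fun y => fderiv ℝ v y (EuclideanSpace.single j (1 : ℝ))) :=
    h1.clm_apply contDiff_const
  exact (h2.continuous_fderiv one_ne_zero).clm_apply continuous_const

lemma stmt12_integrableOn_norm_rpow_neg {E : Type*} [NormedAddCommGroup E] [NormedSpace ℝ E]
    [FiniteDimensional ℝ E] [MeasurableSpace E] [BorelSpace E]
    (μ : Measure E) [μ.IsAddHaarMeasure] {a R : ℝ} (ha0 : 0 < a)
    (ha : a < finrank ℝ E) (hR : 0 < R) :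
    IntegrableOn (fun x => ‖x‖ ^ (-a)) (closedBall (0 : E) R) μ := by
  have hmeas : Measurable fun x : E => ‖x‖ ^ (-a) :=
    measurable_norm.pow_const _
  constructor
  · exact hmeas.aestronglyMeasurable
  rw [HasFiniteIntegral]
  have hnn : ∀ x : E, 0 ≤ ‖x‖ ^ (-a) := fun x => Real.rpow_nonneg (norm_nonneg x) _
  have hkey : (∫⁻ x, ‖‖x‖ ^ (-a)‖ₑ ∂(μ.restrict (closedBall 0 R)))
      = ∫⁻ x, ENNReal.ofReal (‖x‖ ^ (-a)) ∂(μ.restrict (closedBall 0 R)) :=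
    lintegral_enorm_of_nonneg fun x => hnn x
  rw [hkey, lintegral_eq_lintegral_meas_le _ (.of_forall hnn) hmeas.aemeasurable]
  have hsub : ∀ t : ℝ, 0 < t →
      (μ.restrict (closedBall 0 R)) {x : E | t ≤ ‖x‖ ^ (-a)}
        ≤ μ (closedBall (0 : E) (min R (t ^ (-a⁻¹)))) := by
    intro t ht
    rw [Measure.restrict_apply' measurableSet_closedBall]
    refine measure_mono fun x hx => ?_
    obtain ⟨hx1, hx2⟩ := hx
    simp only [mem_setOf_eq] at hx1
    simp only [mem_closedBall_zero_iff] at hx2 ⊢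
    rw [le_min_iff]
    refine ⟨hx2, ?_⟩
    have hxne : ‖x‖ ≠ 0 := by
      intro h
      rw [h, Real.zero_rpow (by linarith : -a ≠ 0)] at hx1
      linarith
    have hxpos : 0 < ‖x‖ := lt_of_le_of_ne (norm_nonneg x) (Ne.symm hxne)
    have := Real.rpow_le_rpow_of_nonpos ht hx1
      (neg_nonpos.mpr (inv_nonneg.mpr ha0.le))
    rwa [← Real.rpow_mul (norm_nonneg x), neg_mul_neg,
      mul_inv_cancel₀ ha0.ne', Real.rpow_one] at this
  set T : ℝ := R ^ (-a) with hT
  have hT0 : 0 < T := Real.rpow_pos_of_pos hR _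
  calc (∫⁻ t in Ioi (0:ℝ), (μ.restrict (closedBall 0 R)) {x : E | t ≤ ‖x‖ ^ (-a)})
      ≤ ∫⁻ t in Ioi (0:ℝ), μ (closedBall (0 : E) (min R (t ^ (-a⁻¹)))) := by
        refine setLIntegral_mono' measurableSet_Ioi fun t ht => hsub t ht
    _ ≤ ∫⁻ t in Ioc 0 T ∪ Ioi T, μ (closedBall (0 : E) (min R (t ^ (-a⁻¹)))) :=
        lintegral_mono_set Ioi_subset_Ioc_union_Ioi
    _ ≤ (∫⁻ t in Ioc 0 T, μ (closedBall (0 : E) (min R (t ^ (-a⁻¹)))))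
        + ∫⁻ t in Ioi T, μ (closedBall (0 : E) (min R (t ^ (-a⁻¹)))) :=
        lintegral_union_le _ _ _
    _ < ⊤ := by
        refine ENNReal.add_lt_top.2 ⟨?_, ?_⟩
        · calc (∫⁻ t in Ioc 0 T, μ (closedBall (0 : E) (min R (t ^ (-a⁻¹)))))
              ≤ ∫⁻ _ in Ioc 0 T, μ (closedBall (0 : E) R) := by
                refine setLIntegral_mono' measurableSet_Ioc fun t _ => ?_
                exact measure_mono (closedBall_subset_closedBall (min_le_left _ _))
            _ = μ (closedBall (0 : E) R) * volume (Ioc (0:ℝ) T) := by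
                rw [setLIntegral_const]
            _ < ⊤ := ENNReal.mul_lt_top measure_closedBall_lt_top
                (by rw [Real.volume_Ioc]; exact ENNReal.ofReal_lt_top)
        · have hcb : ∀ t ∈ Ioi T, μ (closedBall (0 : E) (min R (t ^ (-a⁻¹))))
              ≤ ENNReal.ofReal (t ^ (-a⁻¹ * finrank ℝ E)) * μ (ball (0:E) 1) := by
            intro t ht
            have ht0 : 0 < t := hT0.trans ht
            have h1 : μ (closedBall (0 : E) (min R (t ^ (-a⁻¹))))
                ≤ μ (closedBall (0 : E) (t ^ (-a⁻¹))) :=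
              measure_mono (closedBall_subset_closedBall (min_le_right _ _))
            rw [Measure.addHaar_closedBall μ _ (Real.rpow_nonneg ht0.le _)] at h1
            rwa [← Real.rpow_natCast (t ^ (-a⁻¹)) (finrank ℝ E),
              ← Real.rpow_mul ht0.le] at h1
          calc (∫⁻ t in Ioi T, μ (closedBall (0 : E) (min R (t ^ (-a⁻¹)))))
              ≤ ∫⁻ t in Ioi T, ENNReal.ofReal (t ^ (-a⁻¹ * finrank ℝ E)) * μ (ball (0:E) 1) :=
                setLIntegral_mono' measurableSet_Ioi hcb
            _ = (∫⁻ t in Ioi T, ENNReal.ofReal (t ^ (-a⁻¹ * finrank ℝ E))) * μ (ball (0:E) 1) :=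
                lintegral_mul_const' _ _ measure_ball_lt_top.ne
            _ < ⊤ := by
                refine ENNReal.mul_lt_top ?_ measure_ball_lt_top
                refine IntegrableOn.setLIntegral_lt_top ?_
                refine integrableOn_Ioi_rpow_of_lt ?_ hT0
                have h1 : (1:ℝ) < a⁻¹ * finrank ℝ E := by
                  rw [← div_eq_inv_mul, lt_div_iff₀ ha0, one_mul]; exact ha
                linarith [h1]

lemma stmt12_zeta_bound (n j : ℕ) (hj1 : 1 ≤ j) (hjn : j ≤ n) (ζ : ℝ → ℝ)
    (hζ : HadClass n j ζ) :
    ∃ R C : ℝ, 0 < R ∧ 0 ≤ C ∧ (∀ s, R ≤ s → ζ s = 0) ∧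
      ∀ s : ℝ, 0 < s → |ζ s| ≤ C * s ^ (-((n - j : ℕ) : ℝ)) := by
  obtain ⟨hcont, ⟨R, hR0, hRz⟩, hlim⟩ := hζ
  set a : ℝ := ((n - j : ℕ) : ℝ) with ha_def
  have ha0 : 0 ≤ a := Nat.cast_nonneg _
  have hnear : ∃ δ : ℝ, 0 < δ ∧ ∃ C₁ : ℝ, 0 ≤ C₁ ∧
      ∀ s ∈ Ioo (0:ℝ) δ, |ζ s| ≤ C₁ * s ^ (-a) := by
    rcases eq_or_lt_of_le hjn with hje | hjl
    · rw [if_pos hje] at hlim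
      have hev : ∀ᶠ s in 𝓝[>] (0:ℝ), |ζ s| ≤ |ζ 0| + 1 := by
        filter_upwards [hlim (Metric.ball_mem_nhds (ζ 0) one_pos)] with s hs
        have h1 : |ζ s - ζ 0| < 1 := by simpa [Real.dist_eq] using hs
        have h2 : |ζ s| ≤ |ζ s - ζ 0| + |ζ 0| := by
          calc |ζ s| = |(ζ s - ζ 0) + ζ 0| := by ring_nf
            _ ≤ |ζ s - ζ 0| + |ζ 0| := abs_add_le _ _
        linarith
      rw [Filter.eventually_iff] at hev
      obtain ⟨u, hu, hsub⟩ := mem_nhdsGT_iff_exists_Ioo_subset.mp hev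
      refine ⟨u, hu, |ζ 0| + 1, by positivity, fun s hs => ?_⟩
      have haz : a = 0 := by simp [ha_def, hje]
      have := hsub hs
      calc |ζ s| ≤ |ζ 0| + 1 := this
        _ = (|ζ 0| + 1) * s ^ (-a) := by rw [haz, neg_zero, Real.rpow_zero, mul_one]
    · have hne : ¬ (j = n) := ne_of_lt hjl
      have hj0 : ¬ (j = 0) := by omega
      rw [if_neg hne, if_neg hj0] at hlim
      obtain ⟨h1, -⟩ := hlim
      have hev : ∀ᶠ s in 𝓝[>] (0:ℝ), |s ^ (n - j) * ζ s| ≤ 1 := by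
        filter_upwards [h1 (Metric.ball_mem_nhds 0 one_pos)] with s hs
        have h : dist (s ^ (n - j) * ζ s) 0 < 1 := Metric.mem_ball.mp hs
        rw [Real.dist_0_eq_abs] at h
        linarith
      rw [Filter.eventually_iff] at hev
      obtain ⟨u, hu, hsub⟩ := mem_nhdsGT_iff_exists_Ioo_subset.mp hev
      refine ⟨u, hu, 1, zero_le_one, fun s hs => ?_⟩
      have h2 := hsub hs
      simp only [mem_setOf_eq] at h2
      have hs0 : 0 < s := hs.1
      have hpow : (0:ℝ) < s ^ (n - j) := pow_pos hs0 _
      rw [abs_mul, abs_of_pos hpow] at h2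
      have h3 : |ζ s| ≤ (s ^ (n - j):ℝ)⁻¹ := by
        rw [← one_div, le_div_iff₀ hpow]
        linarith [h2, mul_comm (s ^ (n-j)) |ζ s|]
      calc |ζ s| ≤ (s ^ (n - j):ℝ)⁻¹ := h3
        _ = 1 * s ^ (-a) := by
            rw [one_mul, Real.rpow_neg hs0.le, ← Real.rpow_natCast s (n - j)]
  obtain ⟨δ, hδ0, C₁, hC₁0, hnear'⟩ := hnear
  obtain ⟨M, hM⟩ := (isCompact_Icc : IsCompact (Icc δ R)).exists_bound_of_continuousOn
    (hcont.mono (fun s hs => lt_of_lt_of_le hδ0 hs.1))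
  set M' : ℝ := max M 0 with hM'
  refine ⟨R, max C₁ (M' * R ^ a), hR0, le_max_iff.mpr (Or.inl hC₁0), hRz, fun s hs0 => ?_⟩
  have hrpow : 0 < s ^ (-a) := Real.rpow_pos_of_pos hs0 _
  by_cases hsδ : s < δ
  · calc |ζ s| ≤ C₁ * s ^ (-a) := hnear' s ⟨hs0, hsδ⟩
      _ ≤ max C₁ (M' * R ^ a) * s ^ (-a) :=
        mul_le_mul_of_nonneg_right (le_max_left _ _) hrpow.le
  · push_neg at hsδ
    by_cases hsR : R ≤ s
    · rw [hRz s hsR]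
      simp only [abs_zero]
      have hC : 0 ≤ max C₁ (M' * R ^ a) := le_max_iff.mpr (Or.inl hC₁0)
      positivity
    · push_neg at hsR
      have h1 : |ζ s| ≤ M' := by
        refine le_trans ?_ (le_max_left M 0)
        simpa [Real.norm_eq_abs] using hM s ⟨hsδ, hsR.le⟩
      have h2 : (1:ℝ) ≤ R ^ a * s ^ (-a) := by
        have hsa : s ^ a ≤ R ^ a := Real.rpow_le_rpow hs0.le hsR.le ha0
        have hsa0 : 0 < s ^ a := Real.rpow_pos_of_pos hs0 _
        rw [Real.rpow_neg hs0.le, ← div_eq_mul_inv, le_div_iff₀ hsa0, one_mul]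
        exact hsa
      have hM'0 : (0:ℝ) ≤ M' := le_max_right _ _
      calc |ζ s| ≤ M' := h1
        _ = M' * 1 := (mul_one _).symm
        _ ≤ M' * (R ^ a * s ^ (-a)) := mul_le_mul_of_nonneg_left h2 hM'0
        _ = (M' * R ^ a) * s ^ (-a) := by ring
        _ ≤ max C₁ (M' * R ^ a) * s ^ (-a) :=
          mul_le_mul_of_nonneg_right (le_max_right _ _) hrpow.le

end Stmt12Aux

/-- STATEMENT 12 aux marker -/
theorem stmt12 (n j : ℕ) (hn : 1 ≤ n) (hj1 : 1 ≤ j) (hjn : j ≤ n) (ζ : ℝ → ℝ)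
    (hζ : HadClass n j ζ) (v : En n → ℝ) (hconv : ConvexOn ℝ Set.univ v)
    (hsmooth : ContDiff ℝ 2 v) :
    Integrable (fun x : En n => ζ ‖x‖ * esymmMat (hessMat v x) j) := by
  classical
  open Metric Module in
  set a : ℝ := ((n - j : ℕ) : ℝ) with ha_def
  obtain ⟨R, C, hR0, hC0, hRz, hbound⟩ := stmt12_zeta_bound n j hj1 hjn ζ hζ
  -- continuity of the Hessian symmetric-function factor
  have hFcont : Continuous fun x : En n => esymmMat (hessMat v x) j := by
    unfold esymmMat
    exact continuous_const.mul
      ((stmt12_cont_charpoly_coeff n (n - j)).comp (stmt12_cont_hess v hsmooth))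
  obtain ⟨M, hM⟩ := (isCompact_closedBall (0 : En n) R).exists_bound_of_continuousOn
    hFcont.continuousOn
  set M' : ℝ := max M 0 with hM'def
  have hM'0 : (0:ℝ) ≤ M' := le_max_right _ _
  haveI : Nonempty (Fin n) := Fin.pos_iff_nonempty.mp hn
  haveI : Nontrivial (En n) := by
    refine ⟨0, EuclideanSpace.single ⟨0, hn⟩ 1, fun h => ?_⟩
    have := congrArg (fun f => f ⟨0, hn⟩) h
    simpa using this
  -- integrability of the dominating radial profile
  have hfinrank : finrank ℝ (En n) = n := finrank_euclideanSpace_fin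
  have hint : IntegrableOn (fun x : En n => ‖x‖ ^ (-a)) (closedBall 0 R) := by
    rcases Nat.eq_zero_or_pos (n - j) with hz | hpos
    · have : a = 0 := by simp [ha_def, hz]
      rw [this]
      simp only [neg_zero, Real.rpow_zero]
      exact (integrableOn_const_iff).mpr (Or.inr measure_closedBall_lt_top)
    · refine stmt12_integrableOn_norm_rpow_neg volume ?_ ?_ hR0
      · rw [ha_def]; exact_mod_cast hpos
      · rw [ha_def, hfinrank]
        exact_mod_cast Nat.sub_lt (lt_of_lt_of_le Nat.one_pos hn) hj1
  set g : En n → ℝ := (closedBall (0 : En n) R).indicator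
    (fun x => (C * M') * ‖x‖ ^ (-a)) with hg_def
  have hg : Integrable g := by
    have h1 : IntegrableOn (fun x : En n => (C * M') * ‖x‖ ^ (-a)) (closedBall 0 R) :=
      hint.const_mul (C * M')
    exact h1.integrable_indicator measurableSet_closedBall
  -- a.e. strong measurability of the integrand
  have hsm : AEStronglyMeasurable
      (fun x : En n => ζ ‖x‖ * esymmMat (hessMat v x) j) volume := by
    have hconZ : ContinuousOn (fun x : En n => ζ ‖x‖) ({(0 : En n)}ᶜ) := by
      refine ContinuousOn.comp (hζ.1) continuous_norm.continuousOn fun x hx => ?_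
      simp only [mem_compl_iff, mem_singleton_iff] at hx
      exact mem_Ioi.mpr (norm_pos_iff.mpr hx)
    have hcon : ContinuousOn
        (fun x : En n => ζ ‖x‖ * esymmMat (hessMat v x) j) ({(0 : En n)}ᶜ) :=
      hconZ.mul hFcont.continuousOn
    have h2 := hcon.aestronglyMeasurable (μ := volume)
      (measurableSet_singleton (0 : En n)).compl
    rwa [MeasureTheory.restrict_compl_singleton] at h2
  -- a.e. domination
  have hae : ∀ᵐ x : En n, ‖ζ ‖x‖ * esymmMat (hessMat v x) j‖ ≤ g x := by
    filter_upwards [(Set.countable_singleton (0 : En n)).ae_notMem volume] with x hx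
    have hx0 : x ≠ 0 := by simpa using hx
    have hxpos : 0 < ‖x‖ := norm_pos_iff.mpr hx0
    by_cases hxR : ‖x‖ ≤ R
    · have hmem : x ∈ closedBall (0 : En n) R := mem_closedBall_zero_iff.mpr hxR
      rw [hg_def, Set.indicator_of_mem hmem]
      have h1 : |ζ ‖x‖| ≤ C * ‖x‖ ^ (-a) := hbound _ hxpos
      have h2 : ‖esymmMat (hessMat v x) j‖ ≤ M' := (hM x hmem).trans (le_max_left _ _)
      calc ‖ζ ‖x‖ * esymmMat (hessMat v x) j‖
          = |ζ ‖x‖| * ‖esymmMat (hessMat v x) j‖ := by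
            rw [norm_mul, Real.norm_eq_abs]
        _ ≤ (C * ‖x‖ ^ (-a)) * M' := by
            refine mul_le_mul h1 h2 (norm_nonneg _) ?_
            positivity
        _ = (C * M') * ‖x‖ ^ (-a) := by ring
    · push_neg at hxR
      have hnotmem : x ∉ closedBall (0 : En n) R := by
        simp only [mem_closedBall_zero_iff, not_le]
        exact hxR
      rw [hg_def, Set.indicator_of_notMem hnotmem, hRz _ hxR.le]
      simp
  exact hg.mono' hsm hae
end
end

section
/- For a real n×n matrix A, let [A]_k denote the k-th elementary symmetric function of the eigenvalues (equivalently, (−1)^k times the coefficient of t^{n−k} in the characteristic polynomial of A), and for l,m ∈ {1,…,n} let [A]_k^{lm} := ∂[A]_k/∂a_{lm}, the partial derivative of the polynomial map A ↦ [A]_k with respect to the (l,m) entry. Then for every three times continuously differentiable function u : ℝⁿ → ℝ, every k ∈ {0,…,n}, every l ∈ {1,…,n} and every x ∈ ℝⁿ, one has ∑_{m=1}^{n} ∂/∂x_m ( [D²u(x)]_k^{lm} ) = 0, where D²u(x) denotes the Hessian matrix of u at x. -/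
open Filter Topology MeasureTheory Set

noncomputable section

/-- `[A]ₖ^{lm}`: the partial derivative of `A ↦ [A]ₖ` with respect to the `(l,m)` entry. -/
def esymmEntryDeriv {n : ℕ} (k : ℕ) (l m : Fin n) (A : Matrix (Fin n) (Fin n) ℝ) : ℝ :=
  deriv (fun s : ℝ => esymmMat (A + s • Matrix.single l m (1 : ℝ)) k) 0


/-! ### Auxiliary material for `stmt14` -/

/-- The determinant as a continuous multilinear map in the rows. -/
noncomputable def detCML (n : ℕ) : ContinuousMultilinearMap ℝ (fun _ : Fin n => (Fin n → ℝ)) ℝ :=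
  MultilinearMap.mkContinuous
    ((Matrix.detRowAlternating : (Fin n → ℝ) [⋀^Fin n]→ₗ[ℝ] ℝ).toMultilinearMap)
    (Nat.factorial n) (by
      intro m
      show ‖Matrix.det (Matrix.of m)‖ ≤ _
      rw [Matrix.det_apply]
      calc ‖∑ σ : Equiv.Perm (Fin n), Equiv.Perm.sign σ • ∏ i, Matrix.of m (σ i) i‖
          ≤ ∑ σ : Equiv.Perm (Fin n), ‖Equiv.Perm.sign σ • ∏ i, Matrix.of m (σ i) i‖ :=
            norm_sum_le _ _
        _ ≤ ∑ _σ : Equiv.Perm (Fin n), ∏ i, ‖m i‖ := by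
            refine Finset.sum_le_sum fun σ _ => ?_
            have : ‖Equiv.Perm.sign σ • ∏ i, Matrix.of m (σ i) i‖
                = ‖∏ i, m (σ i) i‖ := by
              rcases Int.units_eq_one_or (Equiv.Perm.sign σ) with h | h <;> simp [h, norm_neg]
            rw [this]
            calc ‖∏ i, m (σ i) i‖ ≤ ∏ i, ‖m (σ i) i‖ := by
                  simpa using norm_prod_le' Finset.univ (fun i => m (σ i) i)
              _ ≤ ∏ i, ‖m (σ i)‖ := by
                  refine Finset.prod_le_prod (fun _ _ => norm_nonneg _) fun i _ => ?_
                  exact norm_le_pi_norm (m (σ i)) i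
              _ = ∏ i, ‖m i‖ := Equiv.prod_comp σ (fun i => ‖m i‖)
        _ = (Nat.factorial n : ℝ) * ∏ i, ‖m i‖ := by
            rw [Finset.sum_const, Finset.card_univ, Fintype.card_perm, Fintype.card_fin,
              nsmul_eq_mul])

lemma detCML_apply {n : ℕ} (v : Fin n → Fin n → ℝ) :
    detCML n v = Matrix.det (Matrix.of v) := rfl

section piola
variable {n : ℕ} {E : Type*} [NormedAddCommGroup E] [NormedSpace ℝ E]

/-- Divergence-free property of the "cofactor-like" rows determinants, in abstract form. -/
lemma piola (N : E → Fin n → Fin n → ℝ) (x : E) (l : Fin n) (e : Fin n → E)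
    (N' : Fin n → Fin n → (E →L[ℝ] ℝ))
    (hdiff : ∀ p q, HasFDerivAt (fun y => N y p q) (N' p q) x)
    (hsym : ∀ m p q, N' p q (e m) = N' p m (e q)) :
    ∑ m : Fin n,
      fderiv ℝ (fun y => Matrix.det ((Matrix.of (N y)).updateRow l (Pi.single m (1 : ℝ)))) x
        (e m) = 0 := by
  classical
  set R : Fin n → Fin n → ℝ := N x with hR
  have key : ∀ m : Fin n,
      fderiv ℝ (fun y => Matrix.det ((Matrix.of (N y)).updateRow l (Pi.single m (1 : ℝ)))) x
        (e m)
      = ∑ p : Fin n, ∑ q : Fin n, (if p = l then 0 else N' p q (e m)) *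
          detCML n (Function.update (Function.update R l (Pi.single m 1)) p
            (Pi.single q 1)) := by
    intro m
    have hg : ∀ i : Fin n, HasFDerivAt
        (fun y => Function.update (N y) l (Pi.single m (1:ℝ)) i)
        (if i = l then (0 : E →L[ℝ] (Fin n → ℝ)) else .pi (fun q => N' i q)) x := by
      intro i
      by_cases hi : i = l
      · subst hi
        simp only [Function.update_self, if_pos rfl]
        exact hasFDerivAt_const _ _
      · simp only [Function.update_of_ne hi, if_neg hi]
        exact hasFDerivAt_pi.2 (fun q => hdiff i q)
    have hD := HasFDerivAt.multilinear_comp (detCML n) hg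
    have heq : (fun y => Matrix.det ((Matrix.of (N y)).updateRow l (Pi.single m (1 : ℝ))))
        = fun y => detCML n (fun i => Function.update (N y) l (Pi.single m (1:ℝ)) i) := by
      funext y
      rw [detCML_apply]
      rfl
    rw [heq, hD.fderiv]
    rw [ContinuousLinearMap.sum_apply]
    refine Finset.sum_congr rfl fun p _ => ?_
    rw [ContinuousLinearMap.comp_apply]
    by_cases hp : p = l
    · subst hp
      simp only [if_pos rfl, ContinuousLinearMap.comp_zero, ContinuousLinearMap.zero_apply,
        ContinuousMultilinearMap.toContinuousLinearMap_apply, Function.update_idem]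
      rw [(detCML n).map_coord_zero p (by simp)]
      simp
    · simp only [if_neg hp, ContinuousMultilinearMap.toContinuousLinearMap_apply]
      have hv : (ContinuousLinearMap.pi (fun q => N' p q)) (e m)
          = ∑ q : Fin n, (N' p q (e m)) • (Pi.single q (1:ℝ) : Fin n → ℝ) := by
        funext j
        simp [ContinuousLinearMap.pi_apply, Finset.sum_apply, Pi.single_apply]
      rw [hv]
      have hms := ((detCML n).toMultilinearMap.map_update_sum Finset.univ p
        (fun q : Fin n => (N' p q (e m)) • (Pi.single q (1:ℝ) : Fin n → ℝ))
        (fun j => Function.update (N x) l (Pi.single m (1:ℝ)) j))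
      rw [show ⇑(detCML n).toMultilinearMap = ⇑(detCML n) from rfl] at hms
      rw [hms]
      refine Finset.sum_congr rfl fun q _ => ?_
      rw [(detCML n).map_update_smul, smul_eq_mul]
  calc ∑ m : Fin n,
      fderiv ℝ (fun y => Matrix.det ((Matrix.of (N y)).updateRow l (Pi.single m (1 : ℝ)))) x
        (e m)
      = ∑ m : Fin n, ∑ p : Fin n, ∑ q : Fin n, (if p = l then 0 else N' p q (e m)) *
          detCML n (Function.update (Function.update R l (Pi.single m 1)) p
            (Pi.single q 1)) := Finset.sum_congr rfl fun m _ => key m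
    _ = ∑ p : Fin n, ∑ m : Fin n, ∑ q : Fin n, (if p = l then 0 else N' p q (e m)) *
          detCML n (Function.update (Function.update R l (Pi.single m 1)) p
            (Pi.single q 1)) := Finset.sum_comm
    _ = 0 := by
        refine Finset.sum_eq_zero fun p _ => ?_
        by_cases hp : p = l
        · simp [hp]
        · simp only [if_neg hp]
          have hlp : l ≠ p := fun h => hp h.symm
          have anti : ∀ m q : Fin n,
              detCML n (Function.update (Function.update R l (Pi.single m 1)) p
                (Pi.single q 1))
              = - detCML n (Function.update (Function.update R l (Pi.single q 1)) p
                (Pi.single m 1)) := by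
            intro m q
            set f := detCML n
            set sm : Fin n → ℝ := Pi.single m 1
            set sq : Fin n → ℝ := Pi.single q 1
            have e2 : ∀ w : Fin n → ℝ, f (Function.update (Function.update R l (sm + sq)) p w)
                = f (Function.update (Function.update R l sm) p w)
                  + f (Function.update (Function.update R l sq) p w) := by
              intro w
              rw [Function.update_comm hlp, f.map_update_add,
                Function.update_comm hp, Function.update_comm hp]
            have ediag : ∀ v : Fin n → ℝ,
                f (Function.update (Function.update R l v) p v) = 0 := by
              intro v
              rw [show f = detCML n from rfl, detCML_apply]
              refine Matrix.det_zero_of_row_eq hlp ?_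
              show Function.update (Function.update R l v) p v l
                = Function.update (Function.update R l v) p v p
              rw [Function.update_of_ne hlp, Function.update_self, Function.update_self]
            have hW : f (Function.update (Function.update R l (sm + sq)) p (sm + sq)) = 0 := by
              rw [show f = detCML n from rfl, detCML_apply]
              refine Matrix.det_zero_of_row_eq hlp ?_
              show Function.update (Function.update R l (sm + sq)) p (sm + sq) l
                = Function.update (Function.update R l (sm + sq)) p (sm + sq) p
              rw [Function.update_of_ne hlp, Function.update_self, Function.update_self]
            have hexp : f (Function.update (Function.update R l (sm + sq)) p (sm + sq))
                = f (Function.update (Function.update R l sm) p sq)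
                  + f (Function.update (Function.update R l sq) p sm) := by
              rw [f.map_update_add, e2 sm, e2 sq, ediag sm, ediag sq]
              ring
            rw [hexp] at hW
            linarith
          set g : Fin n → Fin n → ℝ := fun m q => N' p q (e m) *
            detCML n (Function.update (Function.update R l (Pi.single m 1)) p
              (Pi.single q 1)) with hg
          have hanti : ∀ m q : Fin n, g m q = - g q m := by
            intro m q
            rw [hg]
            simp only
            rw [anti m q, hsym m p q]
            ring
          have h1 : ∑ m : Fin n, ∑ q : Fin n, g m q = ∑ q : Fin n, ∑ m : Fin n, g m q :=
            Finset.sum_comm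
          have h2 : ∑ q : Fin n, ∑ m : Fin n, g m q
              = - ∑ m : Fin n, ∑ q : Fin n, g m q := by
            rw [← Finset.sum_neg_distrib]
            refine Finset.sum_congr rfl fun q _ => ?_
            rw [← Finset.sum_neg_distrib]
            refine Finset.sum_congr rfl fun m _ => ?_
            rw [hanti m q]
          have hfin : ∑ m : Fin n, ∑ q : Fin n, g m q = 0 := by
            rw [h1] at h2 ⊢
            linarith
          exact hfin

/-- Differentiability of the rows-updated determinant. -/
lemma diff_det_update (N : E → Fin n → Fin n → ℝ) (x : E) (l m : Fin n)
    (hdiff : ∀ p q, DifferentiableAt ℝ (fun y => N y p q) x) :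
    DifferentiableAt ℝ
      (fun y => Matrix.det ((Matrix.of (N y)).updateRow l (Pi.single m (1:ℝ)))) x := by
  classical
  have hg : ∀ i : Fin n, HasFDerivAt
      (fun y => Function.update (N y) l (Pi.single m (1:ℝ)) i)
      (if i = l then (0 : E →L[ℝ] (Fin n → ℝ))
        else .pi (fun q => fderiv ℝ (fun y => N y i q) x)) x := by
    intro i
    by_cases hi : i = l
    · subst hi
      simp only [Function.update_self, if_pos rfl]
      exact hasFDerivAt_const _ _
    · simp only [Function.update_of_ne hi, if_neg hi]
      exact hasFDerivAt_pi.2 (fun q => (hdiff i q).hasFDerivAt)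
  have hD := HasFDerivAt.multilinear_comp (detCML n) hg
  have heq : (fun y => Matrix.det ((Matrix.of (N y)).updateRow l (Pi.single m (1 : ℝ))))
      = fun y => detCML n (fun i => Function.update (N y) l (Pi.single m (1:ℝ)) i) := by
    funext y
    rw [detCML_apply]
    rfl
  rw [heq]
  exact hD.differentiableAt

end piola

/-- The Lagrange interpolation weights used to express coefficients of the characteristic
polynomial via determinants. -/
noncomputable def wlag (n k : ℕ) (i : ℕ) : ℝ :=
  (Lagrange.basis (Finset.range (n+1)) (fun j : ℕ => (j : ℝ)) i).coeff (n - k)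

section esf
variable {n : ℕ}

lemma charpoly_eval' (A : Matrix (Fin n) (Fin n) ℝ) (r : ℝ) :
    (Matrix.charpoly A).eval r = Matrix.det (r • (1 : Matrix (Fin n) (Fin n) ℝ) - A) := by
  rw [Matrix.charpoly,
    show (Polynomial.eval r : Polynomial ℝ → ℝ) = ⇑(Polynomial.evalRingHom r) from rfl,
    RingHom.map_det]
  congr 1
  ext i j
  by_cases h : i = j
  · subst h
    simp [Matrix.sub_apply, Matrix.one_apply]
  · simp [Matrix.charmatrix_apply_ne _ _ _ h, Matrix.sub_apply, Matrix.one_apply, h]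

lemma esymmMat_eq' (A : Matrix (Fin n) (Fin n) ℝ) (k : ℕ) :
    esymmMat A k = (-1:ℝ)^k *
      ∑ i ∈ Finset.range (n+1), Matrix.det ((i:ℝ) • 1 - A) * wlag n k i := by
  rw [esymmMat]
  congr 1
  have hinj : Set.InjOn (fun j : ℕ => (j:ℝ)) (Finset.range (n+1)) :=
    fun a _ b _ h => Nat.cast_injective h
  have hdeg : (Matrix.charpoly A).degree < (Finset.range (n+1)).card := by
    rw [Matrix.charpoly_degree_eq_dim, Fintype.card_fin, Finset.card_range]
    exact_mod_cast Nat.lt_succ_self n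
  conv_lhs => rw [Lagrange.eq_interpolate hinj hdeg]
  rw [Lagrange.interpolate_apply, Polynomial.finset_sum_coeff]
  refine Finset.sum_congr rfl fun i _ => ?_
  rw [Polynomial.coeff_C_mul, charpoly_eval', wlag]

lemma det_sub_smul_std (M : Matrix (Fin n) (Fin n) ℝ) (l m : Fin n) (s : ℝ) :
    Matrix.det (M - s • Matrix.single l m 1)
      = Matrix.det M - s * Matrix.det (M.updateRow l (Pi.single m 1)) := by
  have h : M - s • Matrix.single l m 1
      = M.updateRow l (M l + (-s) • (Pi.single m 1 : Fin n → ℝ)) := by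
    ext i j
    by_cases hi : i = l
    · subst hi
      simp [Matrix.single, Pi.single_apply, eq_comm, sub_eq_add_neg]
    · simp [Matrix.updateRow_ne hi, Matrix.single, Ne.symm hi]
  rw [h, Matrix.det_updateRow_add, Matrix.det_updateRow_smul, Matrix.updateRow_eq_self]
  ring

lemma esymmEntryDeriv_eq (k : ℕ) (l m : Fin n) (A : Matrix (Fin n) (Fin n) ℝ) :
    esymmEntryDeriv k l m A = ∑ i ∈ Finset.range (n+1), (-(-1:ℝ)^k * wlag n k i) *
      Matrix.det (((i:ℝ) • 1 - A).updateRow l (Pi.single m 1)) := by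
  rw [esymmEntryDeriv]
  set C0 : ℝ := (-1:ℝ)^k * ∑ i ∈ Finset.range (n+1), Matrix.det ((i:ℝ) • 1 - A) * wlag n k i
    with hC0
  set C1 : ℝ := ∑ i ∈ Finset.range (n+1), (-(-1:ℝ)^k * wlag n k i) *
      Matrix.det (((i:ℝ) • 1 - A).updateRow l (Pi.single m 1)) with hC1
  have hfun : (fun s : ℝ => esymmMat (A + s • Matrix.single l m 1) k)
      = fun s => C0 + s * C1 := by
    funext s
    rw [esymmMat_eq']
    have hmat : ∀ i : ℕ,
        (i:ℝ) • (1 : Matrix (Fin n) (Fin n) ℝ) - (A + s • Matrix.single l m 1)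
        = ((i:ℝ) • 1 - A) - s • Matrix.single l m 1 := by
      intro i
      abel
    simp_rw [hmat, det_sub_smul_std]
    rw [hC0, hC1, Finset.mul_sum, Finset.mul_sum, Finset.mul_sum, ← Finset.sum_add_distrib]
    refine Finset.sum_congr rfl fun i _ => ?_
    ring
  rw [hfun]
  have hd : HasDerivAt (fun s : ℝ => C0 + s * C1) C1 0 := by
    simpa using ((hasDerivAt_id (0:ℝ)).mul_const C1).const_add C0
  rw [hd.deriv]

end esf

lemma fderiv_apply_const' {E : Type*} [NormedAddCommGroup E] [NormedSpace ℝ E]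
    {F : Type*} [NormedAddCommGroup F] [NormedSpace ℝ F]
    {φ : E → (E →L[ℝ] F)} {x : E} (hφ : DifferentiableAt ℝ φ x) (v w : E) :
    fderiv ℝ (fun y => φ y v) x w = (fderiv ℝ φ x w) v := by
  have h := fderiv_clm_apply hφ (differentiableAt_const v)
  rw [show (fun y => φ y v) = (fun y => φ y ((fun _ : E => v) y)) from rfl, h]
  simp

section hess
variable {n : ℕ} (u : En n → ℝ) (hu : ContDiff ℝ 3 u) (x : En n)

/-- The `(p,q)` entry of the Hessian, as a function. -/
def Hent (p q : Fin n) : En n → ℝ :=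
  fun y => fderiv ℝ (fun z => fderiv ℝ u z (EuclideanSpace.single q (1:ℝ))) y
    (EuclideanSpace.single p (1:ℝ))

include hu

lemma contDiff_Hent (p q : Fin n) : ContDiff ℝ 1 (Hent u p q) := by
  have hF : ContDiff ℝ 2 (fderiv ℝ u) := hu.fderiv_right (by norm_num)
  have hG : ContDiff ℝ 2 (fun z => fderiv ℝ u z (EuclideanSpace.single q (1:ℝ))) :=
    hF.clm_apply contDiff_const
  have hG' : ContDiff ℝ 1 (fderiv ℝ (fun z => fderiv ℝ u z (EuclideanSpace.single q (1:ℝ)))) :=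
    hG.fderiv_right (by norm_num)
  exact hG'.clm_apply contDiff_const

lemma Hent_symm (p q : Fin n) : Hent u p q = Hent u q p := by
  have hF : ContDiff ℝ 2 (fderiv ℝ u) := hu.fderiv_right (by norm_num)
  funext y
  have h1 : Hent u p q y = fderiv ℝ (fderiv ℝ u) y (EuclideanSpace.single p (1:ℝ))
      (EuclideanSpace.single q (1:ℝ)) :=
    fderiv_apply_const' ((hF.differentiable (by norm_num)).differentiableAt) _ _
  have h2 : Hent u q p y = fderiv ℝ (fderiv ℝ u) y (EuclideanSpace.single q (1:ℝ))
      (EuclideanSpace.single p (1:ℝ)) :=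
    fderiv_apply_const' ((hF.differentiable (by norm_num)).differentiableAt) _ _
  have hs : IsSymmSndFDerivAt ℝ u y :=
    (hu.of_le (by norm_num)).contDiffAt.isSymmSndFDerivAt (n := 2) (by simp [minSmoothness_of_isRCLikeNormedField])
  rw [h1, h2, hs.eq]

lemma Hent_fderiv_symm (m p q : Fin n) :
    fderiv ℝ (Hent u p q) x (EuclideanSpace.single m (1:ℝ))
      = fderiv ℝ (Hent u q p) x (EuclideanSpace.single m (1:ℝ)) := by
  rw [Hent_symm u hu p q]

lemma Hent_T_symm12 (m p q : Fin n) :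
    fderiv ℝ (Hent u p q) x (EuclideanSpace.single m (1:ℝ))
      = fderiv ℝ (Hent u m q) x (EuclideanSpace.single p (1:ℝ)) := by
  have hF : ContDiff ℝ 2 (fderiv ℝ u) := hu.fderiv_right (by norm_num)
  have hG : ContDiff ℝ 2 (fun z => fderiv ℝ u z (EuclideanSpace.single q (1:ℝ))) :=
    hF.clm_apply contDiff_const
  have hG' : DifferentiableAt ℝ
      (fderiv ℝ (fun z => fderiv ℝ u z (EuclideanSpace.single q (1:ℝ)))) x :=
    ((hG.fderiv_right (m := 1) (by norm_num)).differentiable (by norm_num)).differentiableAt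
  have h1 : fderiv ℝ (Hent u p q) x (EuclideanSpace.single m (1:ℝ))
      = fderiv ℝ (fderiv ℝ (fun z => fderiv ℝ u z (EuclideanSpace.single q (1:ℝ)))) x
        (EuclideanSpace.single m (1:ℝ)) (EuclideanSpace.single p (1:ℝ)) :=
    fderiv_apply_const' hG' _ _
  have h2 : fderiv ℝ (Hent u m q) x (EuclideanSpace.single p (1:ℝ))
      = fderiv ℝ (fderiv ℝ (fun z => fderiv ℝ u z (EuclideanSpace.single q (1:ℝ)))) x
        (EuclideanSpace.single p (1:ℝ)) (EuclideanSpace.single m (1:ℝ)) :=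
    fderiv_apply_const' hG' _ _
  have hs : IsSymmSndFDerivAt ℝ (fun z => fderiv ℝ u z (EuclideanSpace.single q (1:ℝ))) x :=
    hG.contDiffAt.isSymmSndFDerivAt (n := 2) (by simp [minSmoothness_of_isRCLikeNormedField])
  rw [h1, h2, hs.eq]

lemma Hent_T_full (m p q : Fin n) :
    fderiv ℝ (Hent u p q) x (EuclideanSpace.single m (1:ℝ))
      = fderiv ℝ (Hent u p m) x (EuclideanSpace.single q (1:ℝ)) := by
  calc fderiv ℝ (Hent u p q) x (EuclideanSpace.single m (1:ℝ))
      = fderiv ℝ (Hent u q p) x (EuclideanSpace.single m (1:ℝ)) :=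
        Hent_fderiv_symm u hu x m p q
    _ = fderiv ℝ (Hent u m p) x (EuclideanSpace.single q (1:ℝ)) :=
        Hent_T_symm12 u hu x m q p
    _ = fderiv ℝ (Hent u p m) x (EuclideanSpace.single q (1:ℝ)) := Hent_fderiv_symm u hu x q m p

end hess

/-- Reilly's lemma: the cofactor matrices of the Hessian are divergence free. -/
theorem stmt14 (n : ℕ) (u : En n → ℝ) (hu : ContDiff ℝ 3 u) (k : ℕ) (hk : k ≤ n)
    (l : Fin n) (x : En n) :
    ∑ m : Fin n,
      fderiv ℝ (fun y => esymmEntryDeriv k l m (hessMat u y)) x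
        (EuclideanSpace.single m (1 : ℝ)) = 0 := by
  classical
  have hHd : ∀ (p q : Fin n) (y0 : En n), DifferentiableAt ℝ (Hent u p q) y0 :=
    fun p q y0 => ((contDiff_Hent u hu p q).differentiable one_ne_zero).differentiableAt
  -- Step A : rewrite the integrand via the interpolation formula
  have hA : ∀ m : Fin n,
      (fun y => esymmEntryDeriv k l m (hessMat u y))
      = fun y => ∑ i ∈ Finset.range (n+1), (-(-1:ℝ)^k * wlag n k i) *
          Matrix.det ((Matrix.of (fun p q => (i:ℝ) * (if p = q then (1:ℝ) else 0)
            - Hent u p q y)).updateRow l (Pi.single m (1:ℝ))) := by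
    intro m
    funext y
    rw [esymmEntryDeriv_eq]
    refine Finset.sum_congr rfl fun i _ => ?_
    have hmatN : (i:ℝ) • (1 : Matrix (Fin n) (Fin n) ℝ) - hessMat u y
        = Matrix.of (fun p q => (i:ℝ) * (if p = q then (1:ℝ) else 0) - Hent u p q y) := by
      ext p q
      simp [hessMat, Matrix.one_apply, Hent, Matrix.sub_apply, Matrix.smul_apply,
        Matrix.of_apply]
    rw [hmatN]
  have hdet : ∀ (i : ℕ) (m : Fin n), DifferentiableAt ℝ
      (fun y => Matrix.det ((Matrix.of (fun p q => (i:ℝ) * (if p = q then (1:ℝ) else 0)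
        - Hent u p q y)).updateRow l (Pi.single m (1:ℝ)))) x := by
    intro i m
    exact diff_det_update (fun y p q => (i:ℝ) * (if p = q then (1:ℝ) else 0) - Hent u p q y)
      x l m (fun p q => (differentiableAt_const _).sub (hHd p q x))
  calc ∑ m : Fin n,
      fderiv ℝ (fun y => esymmEntryDeriv k l m (hessMat u y)) x
        (EuclideanSpace.single m (1 : ℝ))
      = ∑ m : Fin n, ∑ i ∈ Finset.range (n+1), (-(-1:ℝ)^k * wlag n k i) *
          fderiv ℝ (fun y => Matrix.det ((Matrix.of (fun p q =>
            (i:ℝ) * (if p = q then (1:ℝ) else 0) - Hent u p q y)).updateRow l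
              (Pi.single m (1:ℝ)))) x (EuclideanSpace.single m (1 : ℝ)) := by
        refine Finset.sum_congr rfl fun m _ => ?_
        rw [hA m]
        rw [fderiv_fun_sum (fun i _ => ((hdet i m).const_mul _))]
        rw [ContinuousLinearMap.sum_apply]
        refine Finset.sum_congr rfl fun i _ => ?_
        rw [fderiv_const_mul (hdet i m)]
        simp
    _ = ∑ i ∈ Finset.range (n+1), ∑ m : Fin n, (-(-1:ℝ)^k * wlag n k i) *
          fderiv ℝ (fun y => Matrix.det ((Matrix.of (fun p q =>
            (i:ℝ) * (if p = q then (1:ℝ) else 0) - Hent u p q y)).updateRow l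
              (Pi.single m (1:ℝ)))) x (EuclideanSpace.single m (1 : ℝ)) := Finset.sum_comm
    _ = 0 := by
        refine Finset.sum_eq_zero fun i _ => ?_
        rw [← Finset.mul_sum]
        have hpi := piola (fun y p q => (i:ℝ) * (if p = q then (1:ℝ) else 0) - Hent u p q y)
          x l (fun m => EuclideanSpace.single m (1:ℝ))
          (fun p q => fderiv ℝ (fun y => (i:ℝ) * (if p = q then (1:ℝ) else 0) - Hent u p q y) x)
          (fun p q => ((differentiableAt_const _).sub (hHd p q x)).hasFDerivAt)
          (by
            intro m p q
            beta_reduce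
            rw [fderiv_const_sub, fderiv_const_sub]
            simp only [ContinuousLinearMap.neg_apply, neg_inj]
            exact Hent_T_full u hu x m p q)
        rw [hpi, mul_zero]
end
end

section
/- For a real n×n matrix A, let [A]_k denote the k-th elementary symmetric function of the eigenvalues and [A]_k^{lm} := ∂[A]_k/∂a_{lm}. Then for every three times continuously differentiable function u : ℝⁿ → ℝ, every k ∈ {0,…,n} and every x ∈ ℝⁿ, one has ∑_{m=1}^{n} ∂/∂x_m ( ∑_{l=1}^{n} [D²u(x)]_k^{lm} ∂u/∂x_l (x) ) = k · [D²u(x)]_k, where D²u(x) denotes the Hessian matrix of u at x. -/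
open Filter Topology MeasureTheory Set

noncomputable section

namespace Stmt15
open Polynomial Matrix

section Alg
variable {R : Type*} [CommRing R] {N : ℕ}

-- multilinear expansion of det along a perturbation
lemma det_add_smul_expand (M W : Matrix (Fin N) (Fin N) R) (t : R) :
    (M + t • W).det =
      ∑ T : Finset (Fin N), t ^ T.card * (Matrix.of (T.piecewise W M)).det := by
  classical
  have h := (Matrix.detRowAlternating :
      (Fin N → R) [⋀^Fin N]→ₗ[R] R).toMultilinearMap.map_add_univ
      (fun i => t • W i) (fun i => M i)
  have hL : (M + t • W).det
      = (Matrix.detRowAlternating : (Fin N → R) [⋀^Fin N]→ₗ[R] R).toMultilinearMap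
          ((fun i => t • W i) + fun i => M i) := by
    rw [add_comm M (t • W)]; rfl
  rw [hL, h]
  refine Finset.sum_congr rfl fun T _ => ?_
  have h1 : (T.piecewise (fun i => t • W i) fun i => M i)
      = T.piecewise (fun i => t • (T.piecewise W M) i) (T.piecewise W M) := by
    ext i j
    by_cases hi : i ∈ T <;> simp [Finset.piecewise, hi]
  rw [h1]
  have h2 := (Matrix.detRowAlternating :
      (Fin N → R) [⋀^Fin N]→ₗ[R] R).toMultilinearMap.map_piecewise_smul
      (fun _ => t) (T.piecewise W M) T
  rw [h2]
  simp [smul_eq_mul]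
  rfl

lemma derivative_finset_prod {ι : Type*} [DecidableEq ι] (s : Finset ι) (f : ι → R[X]) :
    derivative (∏ i ∈ s, f i) = ∑ i ∈ s, (∏ j ∈ s.erase i, f j) * derivative (f i) := by
  induction s using Finset.induction_on with
  | empty => simp
  | @insert a s ha ih =>
      rw [Finset.prod_insert ha, derivative_mul, Finset.sum_insert ha, Finset.erase_insert ha,
        ih, Finset.mul_sum]
      congr 1
      · exact mul_comm _ _
      · refine Finset.sum_congr rfl fun i hi => ?_
        have hia : i ≠ a := fun h => ha (h ▸ hi)
        rw [Finset.erase_insert_of_ne hia.symm,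
          Finset.prod_insert (fun h => ha (Finset.mem_of_mem_erase h)), mul_assoc]

lemma det_updateRow_eq_sum (M : Matrix (Fin N) (Fin N) R) (l : Fin N) (v : Fin N → R) :
    (M.updateRow l v).det = ∑ m, v m * (adjugate M) m l := by
  classical
  have key : ∀ s : Finset (Fin N),
      (M.updateRow l (∑ m ∈ s, v m • (Pi.single m (1 : R) : Fin N → R))).det
        = ∑ m ∈ s, v m * (adjugate M) m l := by
    intro s
    induction s using Finset.induction_on with
    | empty =>
        simp only [Finset.sum_empty]
        exact Matrix.det_eq_zero_of_row_eq_zero l (fun j => by simp)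
    | @insert a s ha ih =>
        rw [Finset.sum_insert ha, Matrix.det_updateRow_add, Matrix.det_updateRow_smul, ih,
          Finset.sum_insert ha, Matrix.adjugate_apply]
  have hv : v = ∑ m, v m • (Pi.single m (1 : R) : Fin N → R) := by
    ext j
    simp [Pi.single_apply]
  conv_lhs => rw [hv]
  exact key Finset.univ

lemma natDegree_det_le (M : Matrix (Fin N) (Fin N) R[X]) (h : ∀ i j, (M i j).natDegree ≤ 1) :
    (det M).natDegree ≤ N := by
  rw [det_apply']
  refine natDegree_sum_le_of_forall_le _ _ fun σ _ => ?_
  refine (natDegree_mul_le).trans ?_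
  have h1 : (((Equiv.Perm.sign σ : ℤ) : R[X])).natDegree = 0 := by
    rcases Int.units_eq_one_or (Equiv.Perm.sign σ) with hs | hs <;>
      simp [hs]
  rw [h1, zero_add]
  refine (natDegree_prod_le _ _).trans ?_
  calc ∑ i : Fin N, (M (σ i) i).natDegree ≤ ∑ _i : Fin N, 1 :=
        Finset.sum_le_sum fun i _ => h _ _
    _ = N := by simp

lemma derivative_det (M : Matrix (Fin N) (Fin N) R[X]) :
    derivative (det M) =
      ∑ l, (M.updateRow l (fun j => derivative (M l j))).det := by
  classical
  rw [show (∑ l, (M.updateRow l fun j => derivative (M l j)).det)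
      = ∑ l, ∑ σ : Equiv.Perm (Fin N), ((Equiv.Perm.sign σ : ℤ) : R[X])
          * ∏ i, (M.updateRow l fun j => derivative (M l j)) (σ i) i from
    Finset.sum_congr rfl fun l _ => det_apply' _]
  rw [det_apply', map_sum, Finset.sum_comm]
  refine Finset.sum_congr rfl fun σ _ => ?_
  have hval : ∀ l : Fin N,
      ((Equiv.Perm.sign σ : ℤ) : R[X]) * ∏ i, (M.updateRow l fun j => derivative (M l j)) (σ i) i
        = ((Equiv.Perm.sign σ : ℤ) : R[X]) * ((∏ i ∈ Finset.univ.erase (σ.symm l), M (σ i) i)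
            * derivative (M l (σ.symm l))) := by
    intro l
    congr 1
    rw [← Finset.prod_erase_mul _ _ (Finset.mem_univ (σ.symm l))]
    congr 1
    · refine Finset.prod_congr rfl fun i hi => ?_
      rw [Matrix.updateRow_apply, if_neg]
      intro he
      exact (Finset.mem_erase.mp hi).1 (by simp [← he])
    · rw [Matrix.updateRow_apply, if_pos (by simp)]
  simp_rw [hval]
  rw [← Equiv.sum_comp σ (fun l => ((Equiv.Perm.sign σ : ℤ) : R[X])
      * ((∏ i ∈ Finset.univ.erase (σ.symm l), M (σ i) i) * derivative (M l (σ.symm l))))]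
  simp only [Equiv.symm_apply_apply]
  rw [derivative_mul]
  have hd : derivative (((Equiv.Perm.sign σ : ℤ) : R[X])) = 0 := by
    rcases Int.units_eq_one_or (Equiv.Perm.sign σ) with hs | hs <;> simp [hs]
  rw [hd, zero_mul, zero_add, derivative_finset_prod (Finset.univ : Finset (Fin N))
    (fun i => M (σ i) i), Finset.mul_sum]

end Alg

section Piola
variable {N : ℕ}

lemma piola (M : Matrix (Fin N) (Fin N) ℝ) (T : Fin N → Matrix (Fin N) (Fin N) ℝ)
    (hT : ∀ m p q, T m p q = T q p m) (l : Fin N) :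
    ∑ m, ∑ p ∈ Finset.univ.erase l,
      ((M.updateRow l (Pi.single m 1)).updateRow p (T m p)).det = 0 := by
  classical
  have hexp : ∀ (m p : Fin N),
      ((M.updateRow l (Pi.single m 1)).updateRow p (T m p)).det
        = ∑ q, T m p q * ((M.updateRow l (Pi.single m 1)).updateRow p (Pi.single q 1)).det := by
    intro m p
    rw [det_updateRow_eq_sum]
    refine Finset.sum_congr rfl fun q _ => ?_
    rw [Matrix.adjugate_apply]
  have hanti : ∀ (m q p : Fin N), p ≠ l →
      ((M.updateRow l (Pi.single q 1)).updateRow p (Pi.single m 1)).det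
        = -((M.updateRow l (Pi.single m 1)).updateRow p (Pi.single q 1)).det := by
    intro m q p hpl
    have hlp : l ≠ p := hpl.symm
    have hM2 : ((M.updateRow l (Pi.single q 1)).updateRow p (Pi.single m 1))
        = ((M.updateRow l (Pi.single m 1)).updateRow p (Pi.single q 1)).submatrix
            (Equiv.swap l p) id := by
      ext i j
      rcases eq_or_ne i p with rfl | hip
      · simp [Matrix.updateRow_apply, Equiv.swap_apply_right, hlp, hlp.symm]
      · rcases eq_or_ne i l with rfl | hil
        · simp [Matrix.updateRow_apply, Equiv.swap_apply_left, hlp, hip, hpl]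
        · simp [Matrix.updateRow_apply, Equiv.swap_apply_of_ne_of_ne hil hip, hil, hip]
    rw [hM2, Matrix.det_permute, Equiv.Perm.sign_swap hlp]
    simp
  rw [Finset.sum_comm]
  refine Finset.sum_eq_zero fun p hp => ?_
  have hpl : p ≠ l := (Finset.mem_erase.mp hp).1
  have hmain : (∑ m, ∑ q, T m p q
      * ((M.updateRow l (Pi.single m 1)).updateRow p (Pi.single q 1)).det)
      = -(∑ m, ∑ q, T m p q
      * ((M.updateRow l (Pi.single m 1)).updateRow p (Pi.single q 1)).det) := by
    conv_lhs => rw [Finset.sum_comm]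
    rw [← Finset.sum_neg_distrib]
    refine Finset.sum_congr rfl fun m _ => ?_
    rw [← Finset.sum_neg_distrib]
    refine Finset.sum_congr rfl fun q _ => ?_
    rw [← hT m p q, hanti m q p hpl]
    ring
  have h0 : (∑ m, ∑ q, T m p q
      * ((M.updateRow l (Pi.single m 1)).updateRow p (Pi.single q 1)).det) = 0 := by
    linarith [hmain]
  calc (∑ m, ((M.updateRow l (Pi.single m 1)).updateRow p (T m p)).det)
      = ∑ m, ∑ q, T m p q
        * ((M.updateRow l (Pi.single m 1)).updateRow p (Pi.single q 1)).det :=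
        Finset.sum_congr rfl fun m _ => hexp m p
    _ = 0 := h0

end Piola

section Interp

/-- interpolation nodes -/
def nodeR (n : ℕ) (j : Fin (n + 2)) : ℝ := ((j : ℕ) : ℝ)

/-- interpolation weights -/
def wgt (n k : ℕ) (j : Fin (n + 2)) : ℝ := (Lagrange.basis Finset.univ (nodeR n) j).coeff k

lemma nodeR_injOn (n : ℕ) : Set.InjOn (nodeR n) ↑(Finset.univ : Finset (Fin (n + 2))) := by
  intro a _ b _ h
  have : (a : ℕ) = (b : ℕ) := Nat.cast_injective h
  exact Fin.ext this

lemma coeff_eq_sum_eval {n : ℕ} (p : ℝ[X]) (hp : p.natDegree < n + 2) (k : ℕ) :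
    p.coeff k = ∑ j : Fin (n + 2), wgt n k j * p.eval (nodeR n j) := by
  classical
  have hdeg : p.degree < ((Finset.univ : Finset (Fin (n + 2))).card : ℕ) := by
    refine lt_of_le_of_lt (Polynomial.degree_le_natDegree) ?_
    rw [Finset.card_univ, Fintype.card_fin]
    exact_mod_cast hp
  have hint := Lagrange.eq_interpolate (nodeR_injOn n) hdeg
  conv_lhs => rw [hint]
  rw [Lagrange.interpolate_apply, Polynomial.finset_sum_coeff]
  refine Finset.sum_congr rfl fun j _ => ?_
  rw [Polynomial.coeff_C_mul]
  unfold wgt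
  ring

end Interp


section Bridge
variable {n : ℕ}

/-- the reversed characteristic matrix -/
def rcm (B : Matrix (Fin n) (Fin n) ℝ) : Matrix (Fin n) (Fin n) ℝ[X] :=
  (1 : Matrix (Fin n) (Fin n) ℝ[X]) - (X : ℝ[X]) • B.map C

lemma natDegree_rcm_entry (B : Matrix (Fin n) (Fin n) ℝ) (i j : Fin n) :
    ((rcm B) i j).natDegree ≤ 1 := by
  have hb : ((X : ℝ[X]) * C (B i j)).natDegree ≤ 1 :=
    (natDegree_mul_le).trans (by simp)
  have : (rcm B) i j = (if i = j then 1 else 0) - (X : ℝ[X]) * C (B i j) := by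
    simp [rcm, Matrix.sub_apply, Matrix.one_apply, Matrix.smul_apply, Matrix.map_apply,
      smul_eq_mul]
  rw [this]
  refine (natDegree_sub_le _ _).trans (max_le ?_ hb)
  split_ifs <;> simp

lemma rcm_map_eval (B : Matrix (Fin n) (Fin n) ℝ) (t : ℝ) :
    (rcm B).map (Polynomial.evalRingHom t)
      = (1 : Matrix (Fin n) (Fin n) ℝ) - t • B := by
  ext i j
  simp [rcm, Matrix.map_apply, Matrix.sub_apply, Matrix.one_apply, Matrix.smul_apply,
    smul_eq_mul, apply_ite (Polynomial.eval t)]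
  ring

lemma eval_adjugate_rcm (B : Matrix (Fin n) (Fin n) ℝ) (t : ℝ) (a b : Fin n) :
    Polynomial.eval t ((adjugate (rcm B)) a b)
      = (adjugate ((1 : Matrix (Fin n) (Fin n) ℝ) - t • B)) a b := by
  have h := RingHom.map_adjugate (Polynomial.evalRingHom t) (rcm B)
  have h2 : ((adjugate (rcm B)).map (Polynomial.evalRingHom t)) a b
      = (adjugate ((rcm B).map (Polynomial.evalRingHom t))) a b := by
    rw [show ((adjugate (rcm B)).map (Polynomial.evalRingHom t))
        = (Polynomial.evalRingHom t).mapMatrix (adjugate (rcm B)) from rfl, h]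
    rfl
  rw [rcm_map_eval] at h2
  simpa [Matrix.map_apply] using h2

lemma esymmMat_eq_coeff (B : Matrix (Fin n) (Fin n) ℝ) {k : ℕ} (hk : k ≤ n) :
    esymmMat B k = (-1 : ℝ) ^ k * (det (rcm B)).coeff k := by
  unfold esymmMat
  have hr : det (rcm B) = (Matrix.charpoly B).reverse := by
    rw [Matrix.reverse_charpoly]
    rfl
  rw [hr]
  congr 1
  rw [Polynomial.coeff_reverse]
  congr 1
  rw [Matrix.charpoly_natDegree_eq_dim]
  rw [Polynomial.revAt_le (by simpa using hk)]
  simp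

lemma esymmEntryDeriv_eq_coeff (B : Matrix (Fin n) (Fin n) ℝ) {k : ℕ} (hk : k ≤ n)
    (l m : Fin n) :
    esymmEntryDeriv k l m B
      = (-1 : ℝ) ^ k * (((-X : ℝ[X])) * (adjugate (rcm B)) m l).coeff k := by
  have haff : ∀ s : ℝ, esymmMat (B + s • Matrix.single l m (1 : ℝ)) k
      = esymmMat B k
        + s * ((-1 : ℝ) ^ k * (((-X : ℝ[X])) * (adjugate (rcm B)) m l).coeff k) := by
    intro s
    rw [esymmMat_eq_coeff _ hk, esymmMat_eq_coeff _ hk]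
    have hM : rcm (B + s • Matrix.single l m (1 : ℝ))
        = (rcm B).updateRow l
            ((rcm B) l + (C s * (-X : ℝ[X])) • (Pi.single m (1 : ℝ[X]) : Fin n → ℝ[X])) := by
      refine Matrix.ext fun i j => ?_
      rw [Matrix.updateRow_apply]
      by_cases hil : i = l
      · subst hil
        rw [if_pos rfl]
        simp only [rcm, Matrix.sub_apply, Matrix.one_apply, Matrix.smul_apply, Matrix.map_apply,
          Matrix.add_apply, Pi.add_apply, Pi.smul_apply, Pi.single_apply, smul_eq_mul,
          Matrix.single, Matrix.of_apply]
        by_cases hjm : j = m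
        · subst hjm
          simp only [and_self, if_true, eq_self_iff_true, true_and, if_pos rfl, mul_one, C_add]
          ring
        · simp [hjm, Ne.symm hjm]
      · rw [if_neg hil]
        simp only [rcm, Matrix.sub_apply, Matrix.one_apply, Matrix.smul_apply, Matrix.map_apply,
          Matrix.add_apply, smul_eq_mul, Matrix.single, Matrix.of_apply]
        simp [Ne.symm hil]
    rw [hM, Matrix.det_updateRow_add, Matrix.updateRow_eq_self, Matrix.det_updateRow_smul,
      ← Matrix.adjugate_apply]
    rw [Polynomial.coeff_add]
    have : (C s * (-X : ℝ[X])) * (adjugate (rcm B)) m l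
        = C s * ((-X : ℝ[X]) * (adjugate (rcm B)) m l) := by ring
    rw [this, Polynomial.coeff_C_mul]
    ring
  unfold esymmEntryDeriv
  have hfun : (fun s : ℝ => esymmMat (B + s • Matrix.single l m (1 : ℝ)) k)
      = fun s : ℝ => esymmMat B k
        + s * ((-1 : ℝ) ^ k * (((-X : ℝ[X])) * (adjugate (rcm B)) m l).coeff k) :=
    funext haff
  rw [hfun]
  have hda : HasDerivAt (fun s : ℝ => esymmMat B k
      + s * ((-1 : ℝ) ^ k * (((-X : ℝ[X])) * (adjugate (rcm B)) m l).coeff k))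
      ((-1 : ℝ) ^ k * (((-X : ℝ[X])) * (adjugate (rcm B)) m l).coeff k) 0 := by
    simpa using ((hasDerivAt_id (0 : ℝ)).mul_const
      ((-1 : ℝ) ^ k * (((-X : ℝ[X])) * (adjugate (rcm B)) m l).coeff k)).const_add
      (esymmMat B k)
  exact hda.deriv

lemma natDegree_adjugate_rcm (B : Matrix (Fin n) (Fin n) ℝ) (a b : Fin n) :
    ((adjugate (rcm B)) a b).natDegree ≤ n := by
  rw [Matrix.adjugate_apply]
  refine natDegree_det_le _ ?_
  intro i j
  rw [Matrix.updateRow_apply]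
  split_ifs
  · rcases eq_or_ne j a with rfl | hja
    · simp [Pi.single_apply]
    · simp [Pi.single_apply, hja]
  · exact natDegree_rcm_entry B i j

lemma esymmEntryDeriv_eq_sum (B : Matrix (Fin n) (Fin n) ℝ) {k : ℕ} (hk : k ≤ n)
    (l m : Fin n) :
    esymmEntryDeriv k l m B
      = ∑ j : Fin (n + 2), ((-1 : ℝ) ^ k * wgt n k j) *
          (-(nodeR n j) * (adjugate ((1 : Matrix (Fin n) (Fin n) ℝ) - (nodeR n j) • B)) m l) := by
  rw [esymmEntryDeriv_eq_coeff B hk l m]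
  have hdeg : (((-X : ℝ[X])) * (adjugate (rcm B)) m l).natDegree < n + 2 := by
    refine lt_of_le_of_lt (natDegree_mul_le) ?_
    have h1 := natDegree_adjugate_rcm B m l
    have h2 : (-X : ℝ[X]).natDegree = 1 := by simp
    omega
  rw [coeff_eq_sum_eval _ hdeg k, Finset.mul_sum]
  refine Finset.sum_congr rfl fun j _ => ?_
  rw [Polynomial.eval_mul]
  have h3 : Polynomial.eval (nodeR n j) ((adjugate (rcm B)) m l)
      = (adjugate ((1 : Matrix (Fin n) (Fin n) ℝ) - (nodeR n j) • B)) m l :=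
    eval_adjugate_rcm B (nodeR n j) m l
  rw [h3]
  simp only [Polynomial.eval_neg, Polynomial.eval_X]
  ring

lemma keyId (B : Matrix (Fin n) (Fin n) ℝ) {k : ℕ} (hk : k ≤ n) :
    (k : ℝ) * esymmMat B k
      = ∑ j : Fin (n + 2), ((-1 : ℝ) ^ k * wgt n k j) *
          (-(nodeR n j) * ∑ l, ∑ m, B l m *
            (adjugate ((1 : Matrix (Fin n) (Fin n) ℝ) - (nodeR n j) • B)) m l) := by
  rw [esymmMat_eq_coeff B hk]
  have hstep1 : (k : ℝ) * (det (rcm B)).coeff k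
      = ((X : ℝ[X]) * derivative (det (rcm B))).coeff k := by
    cases k with
    | zero => simp [Polynomial.mul_coeff_zero]
    | succ k' =>
        rw [Polynomial.coeff_X_mul, Polynomial.coeff_derivative]
        push_cast
        ring
  have hderiv : derivative (det (rcm B))
      = ∑ l, ∑ m, (-C (B l m)) * (adjugate (rcm B)) m l := by
    rw [derivative_det (rcm B)]
    refine Finset.sum_congr rfl fun l _ => ?_
    have hrow : (fun j => derivative ((rcm B) l j)) = fun j => -C (B l j) := by
      funext j
      have : (rcm B) l j = (if l = j then 1 else 0) - (X : ℝ[X]) * C (B l j) := by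
        simp [rcm, Matrix.sub_apply, Matrix.one_apply, Matrix.smul_apply, Matrix.map_apply,
          smul_eq_mul]
      rw [this]
      split_ifs <;> simp
    rw [hrow, det_updateRow_eq_sum]
  have hdeg : ((X : ℝ[X]) * derivative (det (rcm B))).natDegree < n + 2 := by
    refine lt_of_le_of_lt (natDegree_mul_le) ?_
    have h1 : (det (rcm B)).natDegree ≤ n := natDegree_det_le _ (natDegree_rcm_entry B)
    have h2 : (derivative (det (rcm B))).natDegree ≤ (det (rcm B)).natDegree - 1 :=
      natDegree_derivative_le _
    have h3 : (X : ℝ[X]).natDegree = 1 := natDegree_X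
    omega
  calc (k : ℝ) * ((-1 : ℝ) ^ k * (det (rcm B)).coeff k)
      = (-1 : ℝ) ^ k * ((k : ℝ) * (det (rcm B)).coeff k) := by ring
    _ = (-1 : ℝ) ^ k * (((X : ℝ[X]) * derivative (det (rcm B))).coeff k) := by rw [hstep1]
    _ = (-1 : ℝ) ^ k * ∑ j : Fin (n + 2), wgt n k j *
          Polynomial.eval (nodeR n j) ((X : ℝ[X]) * derivative (det (rcm B))) := by
        rw [coeff_eq_sum_eval _ hdeg k]
    _ = ∑ j : Fin (n + 2), ((-1 : ℝ) ^ k * wgt n k j) *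
          (-(nodeR n j) * ∑ l, ∑ m, B l m *
            (adjugate ((1 : Matrix (Fin n) (Fin n) ℝ) - (nodeR n j) • B)) m l) := by
        rw [Finset.mul_sum]
        refine Finset.sum_congr rfl fun j _ => ?_
        rw [Polynomial.eval_mul, Polynomial.eval_X, hderiv]
        rw [Polynomial.eval_finset_sum]
        have hinner : ∀ l, Polynomial.eval (nodeR n j)
            (∑ m, (-C (B l m)) * (adjugate (rcm B)) m l)
            = ∑ m, -(B l m *
              (adjugate ((1 : Matrix (Fin n) (Fin n) ℝ) - (nodeR n j) • B)) m l) := by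
          intro l
          rw [Polynomial.eval_finset_sum]
          refine Finset.sum_congr rfl fun m _ => ?_
          rw [Polynomial.eval_mul, Polynomial.eval_neg, Polynomial.eval_C,
            eval_adjugate_rcm B (nodeR n j) m l]
          ring
        rw [Finset.sum_congr rfl fun l _ => hinner l]
        rw [show (∑ l, ∑ m, -(B l m *
              (adjugate ((1 : Matrix (Fin n) (Fin n) ℝ) - (nodeR n j) • B)) m l))
            = -∑ l, ∑ m, B l m *
              (adjugate ((1 : Matrix (Fin n) (Fin n) ℝ) - (nodeR n j) • B)) m l by
          simp [Finset.sum_neg_distrib]]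
        ring

end Bridge


section Analysis
variable {N : ℕ}

lemma contDiff_detOf : ContDiff ℝ 1 (fun g : Fin N → Fin N → ℝ => (Matrix.of g).det) := by
  have hfun : (fun g : Fin N → Fin N → ℝ => (Matrix.of g).det)
      = fun g => ∑ σ : Equiv.Perm (Fin N), ((Equiv.Perm.sign σ : ℤ) : ℝ) * ∏ i, g (σ i) i :=
    funext fun g => Matrix.det_apply' _
  rw [hfun]
  refine ContDiff.sum fun σ _ => ContDiff.mul contDiff_const ?_
  refine contDiff_prod fun i _ => ?_
  exact (((ContinuousLinearMap.proj i : (Fin N → ℝ) →L[ℝ] ℝ).comp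
    (ContinuousLinearMap.proj (σ i) : (Fin N → Fin N → ℝ) →L[ℝ] (Fin N → ℝ)))).contDiff

lemma hasDerivAt_det_line (M W : Matrix (Fin N) (Fin N) ℝ) :
    HasDerivAt (fun s : ℝ => (M + s • W).det) (∑ p, (M.updateRow p (W p)).det) 0 := by
  classical
  have hfun : (fun s : ℝ => (M + s • W).det)
      = fun s : ℝ => ∑ T : Finset (Fin N), s ^ T.card * (Matrix.of (T.piecewise W M)).det :=
    funext fun s => det_add_smul_expand M W s
  rw [hfun]
  have key : ∀ T : Finset (Fin N), HasDerivAt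
      (fun s : ℝ => s ^ T.card * (Matrix.of (T.piecewise W M)).det)
      (if T.card = 1 then (Matrix.of (T.piecewise W M)).det else 0) 0 := by
    intro T
    have h := (hasDerivAt_pow T.card (0 : ℝ)).mul_const ((Matrix.of (T.piecewise W M)).det)
    have e : (if T.card = 1 then (Matrix.of (T.piecewise W M)).det else 0)
        = (T.card : ℝ) * 0 ^ (T.card - 1) * (Matrix.of (T.piecewise W M)).det := by
      match hc : T.card with
      | 0 => simp
      | 1 => simp
      | (c + 2) => simp [zero_pow]
    rw [e]; exact h
  have hsum := HasDerivAt.fun_sum (fun T (_ : T ∈ Finset.univ) => key T)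
  suffices hs : (∑ p, (M.updateRow p (W p)).det) = ∑ T : Finset (Fin N),
      (if T.card = 1 then (Matrix.of (T.piecewise W M)).det else 0) by
    rw [hs]; exact hsum
  have h1 : (∑ T : Finset (Fin N),
        (if T.card = 1 then (Matrix.of (T.piecewise W M)).det else 0))
      = ∑ T ∈ Finset.univ.filter (fun T : Finset (Fin N) => T.card = 1),
          (Matrix.of (T.piecewise W M)).det := (Finset.sum_filter _ _).symm
  have h2 : Finset.univ.filter (fun T : Finset (Fin N) => T.card = 1)
      = Finset.univ.image (fun p : Fin N => ({p} : Finset (Fin N))) := by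
    ext T
    simp [Finset.card_eq_one, eq_comm]
  have h3 : ∑ T ∈ Finset.univ.image (fun p : Fin N => ({p} : Finset (Fin N))),
        (Matrix.of (T.piecewise W M)).det
      = ∑ p : Fin N, (Matrix.of (({p} : Finset (Fin N)).piecewise W M)).det := by
    refine Finset.sum_image ?_
    intro a _ b _ h
    exact Finset.singleton_injective h
  have h4 : ∀ p : Fin N, (Matrix.of (({p} : Finset (Fin N)).piecewise W M)).det
      = (M.updateRow p (W p)).det := by
    intro p
    refine congrArg Matrix.det (Matrix.ext fun i j => ?_)
    by_cases hip : i = p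
    · subst hip; simp [Finset.piecewise, Matrix.updateRow_apply]
    · simp [Finset.piecewise, Matrix.updateRow_apply, hip]
  rw [h1, h2, h3]
  exact (Finset.sum_congr rfl fun p _ => (h4 p)).symm

lemma hasDerivAt_line_comp {E : Type*} [NormedAddCommGroup E] [NormedSpace ℝ E]
    {F : E → ℝ} {B : E} (V : E) (hF : DifferentiableAt ℝ F B) :
    HasDerivAt (fun s : ℝ => F (B + s • V)) (fderiv ℝ F B V) 0 := by
  have hline : HasDerivAt (fun s : ℝ => B + s • V) V 0 := by
    simpa using ((hasDerivAt_id (0 : ℝ)).smul_const V).const_add B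
  have hf : HasFDerivAt F (fderiv ℝ F B) ((fun s : ℝ => B + s • V) 0) := by
    simpa using hF.hasFDerivAt
  exact hf.comp_hasDerivAt 0 hline

/-- entry of the adjugate of `1 - t • A`, as a function of the matrix entries -/
def adjFun (t : ℝ) (l m : Fin N) : (Fin N → Fin N → ℝ) → ℝ :=
  fun g => (((1 : Matrix (Fin N) (Fin N) ℝ) - t • Matrix.of g).updateRow l (Pi.single m 1)).det

lemma adjFun_eq_adjugate (t : ℝ) (l m : Fin N) (g : Fin N → Fin N → ℝ) :
    adjFun t l m g
      = (adjugate ((1 : Matrix (Fin N) (Fin N) ℝ) - t • Matrix.of g)) m l :=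
  (Matrix.adjugate_apply _ _ _).symm

lemma contDiff_adjFun (t : ℝ) (l m : Fin N) : ContDiff ℝ 1 (adjFun t l m : (Fin N → Fin N → ℝ) → ℝ) := by
  have hfun : (adjFun t l m : (Fin N → Fin N → ℝ) → ℝ)
      = (fun g : Fin N → Fin N → ℝ => (Matrix.of g).det) ∘
        (fun (g : Fin N → Fin N → ℝ) (p q : Fin N) =>
          if p = l then (Pi.single m (1 : ℝ) : Fin N → ℝ) q
          else (if p = q then (1 : ℝ) else 0) - t * g p q) := by
    funext g
    refine congrArg Matrix.det (Matrix.ext fun p q => ?_)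
    by_cases hp : p = l
    · subst hp
      simp [Matrix.updateRow_apply]
    · simp [Matrix.updateRow_apply, hp, Matrix.sub_apply, Matrix.one_apply, Matrix.smul_apply,
        smul_eq_mul]
  rw [hfun]
  refine contDiff_detOf.comp ?_
  refine contDiff_pi.mpr fun p => contDiff_pi.mpr fun q => ?_
  by_cases hp : p = l
  · simp only [if_pos hp]
    exact contDiff_const
  · simp only [if_neg hp]
    exact contDiff_const.sub (contDiff_const.mul
      (((ContinuousLinearMap.proj q : (Fin N → ℝ) →L[ℝ] ℝ).comp
        (ContinuousLinearMap.proj p : (Fin N → Fin N → ℝ) →L[ℝ] (Fin N → ℝ))).contDiff))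

lemma fderiv_adjFun (t : ℝ) (l m : Fin N) (B V : Fin N → Fin N → ℝ) :
    fderiv ℝ (adjFun t l m) B V
      = ∑ p ∈ Finset.univ.erase l,
          ((((1 : Matrix (Fin N) (Fin N) ℝ) - t • Matrix.of B).updateRow l
            (Pi.single m 1)).updateRow p (fun q => -t * V p q)).det := by
  classical
  have hdiff : DifferentiableAt ℝ (adjFun t l m) B :=
    (contDiff_adjFun t l m).differentiable one_ne_zero B
  have hline := hasDerivAt_line_comp V hdiff
  set M₀ : Matrix (Fin N) (Fin N) ℝ :=
    ((1 : Matrix (Fin N) (Fin N) ℝ) - t • Matrix.of B).updateRow l (Pi.single m 1) with hM₀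
  set W : Matrix (Fin N) (Fin N) ℝ :=
    Matrix.of (fun p q => if p = l then 0 else -t * V p q) with hW
  have hcurve : (fun s : ℝ => adjFun t l m (B + s • V)) = fun s => (M₀ + s • W).det := by
    funext s
    refine congrArg Matrix.det (Matrix.ext fun p q => ?_)
    by_cases hp : p = l
    · subst hp
      simp [M₀, W, Matrix.updateRow_apply, Matrix.add_apply, Matrix.smul_apply, adjFun]
    · simp only [adjFun, M₀, W, Matrix.updateRow_apply, hp, if_false, Matrix.sub_apply,
        Matrix.one_apply, Matrix.smul_apply, Matrix.add_apply, Matrix.of_apply, Pi.add_apply,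
        Pi.smul_apply, smul_eq_mul]
      ring
  rw [hcurve] at hline
  have huniq := hline.unique (hasDerivAt_det_line M₀ W)
  rw [huniq, ← Finset.sum_erase_add _ _ (Finset.mem_univ l)]
  have hz : (M₀.updateRow l (W l)).det = 0 := by
    refine Matrix.det_eq_zero_of_row_eq_zero l fun j => ?_
    simp [W]
  rw [hz, add_zero]
  refine Finset.sum_congr rfl fun p hp => ?_
  have hWp : W p = fun q => -t * V p q :=
    funext fun q => if_neg (Finset.mem_erase.mp hp).1
  rw [hWp]

end Analysis

end Stmt15

set_option maxHeartbeats 1000000 in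
/-- `div_m([D²u]ₖ^{lm} u_l) = k [D²u]ₖ` for `u ∈ C³(ℝⁿ)`. -/
theorem stmt15 (n : ℕ) (u : En n → ℝ) (hu : ContDiff ℝ 3 u) (k : ℕ) (hk : k ≤ n) (x : En n) :
    ∑ m : Fin n,
      fderiv ℝ
        (fun y => ∑ l : Fin n,
          esymmEntryDeriv k l m (hessMat u y) * fderiv ℝ u y (EuclideanSpace.single l (1 : ℝ)))
        x (EuclideanSpace.single m (1 : ℝ))
      = (k : ℝ) * esymmMat (hessMat u x) k := by
  classical
  set E : Fin n → En n := fun i => EuclideanSpace.single i (1 : ℝ) with hE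
  set g : Fin n → En n → ℝ := fun l y => fderiv ℝ u y (E l) with hgdef
  set hG : En n → (Fin n → Fin n → ℝ) :=
    fun y p q => fderiv ℝ (fun z => fderiv ℝ u z (E q)) y (E p) with hhG
  set c : Fin (n + 2) → ℝ :=
    fun j => (-1 : ℝ) ^ k * Stmt15.wgt n k j * (-(Stmt15.nodeR n j)) with hc
  have hOf : ∀ y, Matrix.of (hG y) = hessMat u y := fun y => rfl
  have hGapp : ∀ y p q, hG y p q = hessMat u y p q := fun y p q => rfl
  -- smoothness facts
  have hu2 : ContDiff ℝ 2 (fderiv ℝ u) := hu.fderiv_right (by norm_num)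
  have hg2 : ∀ q, ContDiff ℝ 2 (g q) := fun q =>
    (ContinuousLinearMap.apply ℝ ℝ (E q)).contDiff.comp hu2
  have hgd1 : ∀ q, ContDiff ℝ 1 (fderiv ℝ (g q)) := fun q => (hg2 q).fderiv_right (by norm_num)
  have hGentry : ∀ p q, ContDiff ℝ 1 (fun y => hG y p q) := fun p q =>
    (ContinuousLinearMap.apply ℝ ℝ (E p)).contDiff.comp (hgd1 q)
  -- rewriting a directional derivative of a directional derivative
  have hclm : ∀ (f : En n → ℝ), ContDiff ℝ 2 f → ∀ (y : En n) (v w : En n),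
      fderiv ℝ (fun z => fderiv ℝ f z v) y w = fderiv ℝ (fderiv ℝ f) y w v := by
    intro f hf y v w
    have hdf : DifferentiableAt ℝ (fderiv ℝ f) y :=
      (hf.fderiv_right (m := 1) (by norm_num)).differentiable one_ne_zero y
    rw [fderiv_clm_apply hdf (differentiableAt_const v)]
    simp
  have hu2' : ContDiff ℝ 2 u := hu.of_le (by norm_num)
  -- symmetry of the Hessian
  have hsymA : ∀ (y : En n) (p q : Fin n), hG y p q = hG y q p := by
    intro y p q
    have h1 : hG y p q = fderiv ℝ (fderiv ℝ u) y (E p) (E q) := hclm u hu2' y (E q) (E p)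
    have h2 : hG y q p = fderiv ℝ (fderiv ℝ u) y (E q) (E p) := hclm u hu2' y (E p) (E q)
    rw [h1, h2]
    exact (hu.contDiffAt.isSymmSndFDerivAt (by norm_num)).eq (E p) (E q)
  -- third derivative tensor
  set S : Fin n → (Fin n → Fin n → ℝ) :=
    fun m' p q => fderiv ℝ (fun y => hG y p q) x (E m') with hS
  have hS2 : ∀ m' p q, S m' p q = fderiv ℝ (fderiv ℝ (g q)) x (E m') (E p) := fun m' p q =>
    hclm (g q) (hg2 q) x (E p) (E m')
  have hsym_S_mp : ∀ m' p q, S m' p q = S p m' q := by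
    intro m' p q
    rw [hS2 m' p q, hS2 p m' q]
    exact ((hg2 q).contDiffAt.isSymmSndFDerivAt (by norm_num)).eq (E m') (E p)
  have hsym_S_pq : ∀ m' p q, S m' p q = S m' q p := by
    intro m' p q
    have hfe : (fun y => hG y p q) = fun y => hG y q p := funext fun y => hsymA y p q
    show fderiv ℝ (fun y => hG y p q) x (E m') = fderiv ℝ (fun y => hG y q p) x (E m')
    rw [hfe]
  have hsym_S : ∀ m' p q, S m' p q = S q p m' := by
    intro m' p q
    calc S m' p q = S m' q p := hsym_S_pq _ _ _
      _ = S q m' p := hsym_S_mp _ _ _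
      _ = S q p m' := hsym_S_pq _ _ _
  -- derivative of the Hessian-entries map
  have hGdiffAt : DifferentiableAt ℝ hG x :=
    differentiableAt_pi.mpr fun p => differentiableAt_pi.mpr fun q =>
      ((hGentry p q).differentiable one_ne_zero x)
  have hfderiv_hG : ∀ m', fderiv ℝ hG x (E m') = S m' := by
    intro m'
    have h1 : fderiv ℝ hG x = ContinuousLinearMap.pi
        (fun p => fderiv ℝ (fun y => hG y p) x) :=
      fderiv_pi (fun p => differentiableAt_pi.mpr fun q =>
        (hGentry p q).differentiable one_ne_zero x)
    funext p q
    rw [h1, ContinuousLinearMap.pi_apply]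
    have h2 : fderiv ℝ (fun y => hG y p) x = ContinuousLinearMap.pi
        (fun q => fderiv ℝ (fun y => hG y p q) x) :=
      fderiv_pi (fun q => (hGentry p q).differentiable one_ne_zero x)
    rw [h2, ContinuousLinearMap.pi_apply]
  have hgA : ∀ (l m' : Fin n), fderiv ℝ (g l) x (E m') = hG x m' l := fun l m' => rfl
  have hgdiff : ∀ l, DifferentiableAt ℝ (g l) x := fun l => (hg2 l).differentiable (by norm_num) x
  -- rewrite the integrand functions
  have hrew : ∀ m : Fin n,
      (fun y => ∑ l : Fin n, esymmEntryDeriv k l m (hessMat u y) * fderiv ℝ u y (E l))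
      = fun y => ∑ l : Fin n, ∑ j : Fin (n + 2),
          c j * (Stmt15.adjFun (Stmt15.nodeR n j) l m (hG y) * g l y) := by
    intro m
    funext y
    refine Finset.sum_congr rfl fun l _ => ?_
    rw [Stmt15.esymmEntryDeriv_eq_sum (hessMat u y) hk l m, Finset.sum_mul]
    refine Finset.sum_congr rfl fun j _ => ?_
    rw [Stmt15.adjFun_eq_adjugate, hOf y, hc, hgdef]
    ring
  -- per-direction derivative computation
  have hfd_term : ∀ m : Fin n,
      fderiv ℝ (fun y => ∑ l : Fin n, ∑ j : Fin (n + 2),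
          c j * (Stmt15.adjFun (Stmt15.nodeR n j) l m (hG y) * g l y)) x (E m)
      = ∑ l : Fin n, ∑ j : Fin (n + 2),
          c j * (Stmt15.adjFun (Stmt15.nodeR n j) l m (hG x) * hG x m l
            + g l x * (fderiv ℝ (Stmt15.adjFun (Stmt15.nodeR n j) l m) (hG x) (S m))) := by
    intro m
    have hterm : ∀ (l : Fin n) (j : Fin (n + 2)),
        HasFDerivAt (fun y => c j * (Stmt15.adjFun (Stmt15.nodeR n j) l m (hG y) * g l y))
          (c j • ((Stmt15.adjFun (Stmt15.nodeR n j) l m (hG x)) • fderiv ℝ (g l) x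
            + g l x • ((fderiv ℝ (Stmt15.adjFun (Stmt15.nodeR n j) l m) (hG x)).comp
                (fderiv ℝ hG x)))) x := by
      intro l j
      have hA : HasFDerivAt (fun y => Stmt15.adjFun (Stmt15.nodeR n j) l m (hG y))
          ((fderiv ℝ (Stmt15.adjFun (Stmt15.nodeR n j) l m) (hG x)).comp
            (fderiv ℝ hG x)) x :=
        ((((Stmt15.contDiff_adjFun _ l m).differentiable one_ne_zero) (hG x)).hasFDerivAt).comp x
          hGdiffAt.hasFDerivAt
      exact (hA.mul (hgdiff l).hasFDerivAt).const_mul (c j)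
    have hsum : HasFDerivAt (fun y => ∑ l : Fin n, ∑ j : Fin (n + 2),
          c j * (Stmt15.adjFun (Stmt15.nodeR n j) l m (hG y) * g l y))
        (∑ l : Fin n, ∑ j : Fin (n + 2),
          c j • ((Stmt15.adjFun (Stmt15.nodeR n j) l m (hG x)) • fderiv ℝ (g l) x
            + g l x • ((fderiv ℝ (Stmt15.adjFun (Stmt15.nodeR n j) l m) (hG x)).comp
                (fderiv ℝ hG x)))) x :=
      HasFDerivAt.fun_sum (fun l _ => HasFDerivAt.fun_sum (fun j _ => hterm l j))
    rw [hsum.fderiv]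
    simp only [ContinuousLinearMap.coe_sum', Finset.sum_apply, ContinuousLinearMap.coe_smul',
      Pi.smul_apply, ContinuousLinearMap.add_apply, ContinuousLinearMap.coe_comp',
      Function.comp_apply, ContinuousLinearMap.smul_apply, smul_eq_mul]
    refine Finset.sum_congr rfl fun l _ => Finset.sum_congr rfl fun j _ => ?_
    rw [hfderiv_hG m, hgA l m] <;> ring
  -- Piola identity kills the third-derivative terms
  have hT1 : ∀ (j : Fin (n + 2)) (l : Fin n),
      (∑ m : Fin n, fderiv ℝ (Stmt15.adjFun (Stmt15.nodeR n j) l m) (hG x) (S m)) = 0 := by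
    intro j l
    have hF : ∀ m : Fin n, fderiv ℝ (Stmt15.adjFun (Stmt15.nodeR n j) l m) (hG x) (S m)
        = ∑ p ∈ Finset.univ.erase l,
            ((((1 : Matrix (Fin n) (Fin n) ℝ) - Stmt15.nodeR n j • Matrix.of (hG x)).updateRow l
              (Pi.single m 1)).updateRow p (fun q => -(Stmt15.nodeR n j) * S m p q)).det :=
      fun m => Stmt15.fderiv_adjFun _ l m (hG x) (S m)
    rw [Finset.sum_congr rfl fun m _ => hF m]
    have hpiola := Stmt15.piola
      ((1 : Matrix (Fin n) (Fin n) ℝ) - Stmt15.nodeR n j • Matrix.of (hG x))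
      (fun m => Matrix.of (fun p q => -(Stmt15.nodeR n j) * S m p q))
      (fun m p q => by
        show -(Stmt15.nodeR n j) * S m p q = -(Stmt15.nodeR n j) * S q p m
        rw [hsym_S m p q]) l
    exact hpiola
  -- Euler identity handles the second-derivative terms
  have hT2 : (∑ m : Fin n, ∑ l : Fin n, ∑ j : Fin (n + 2),
        c j * (Stmt15.adjFun (Stmt15.nodeR n j) l m (hG x) * hG x m l))
      = (k : ℝ) * esymmMat (hessMat u x) k := by
    have step4 : (∑ j : Fin (n + 2), ∑ l : Fin n, ∑ m : Fin n,
            c j * (Stmt15.adjFun (Stmt15.nodeR n j) l m (hG x) * hG x m l))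
        = ∑ j : Fin (n + 2), ((-1 : ℝ) ^ k * Stmt15.wgt n k j) *
            (-(Stmt15.nodeR n j) * ∑ l, ∑ m, (hessMat u x) l m *
              (Matrix.adjugate ((1 : Matrix (Fin n) (Fin n) ℝ)
                - (Stmt15.nodeR n j) • (hessMat u x))) m l) := by
      refine Finset.sum_congr rfl fun j _ => ?_
      simp only [Finset.mul_sum]
      refine Finset.sum_congr rfl fun l _ => Finset.sum_congr rfl fun m _ => ?_
      have hml : hG x m l = (hessMat u x) l m := by
        rw [hGapp x m l, ← hGapp x m l, hsymA x m l, hGapp x l m]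
      rw [Stmt15.adjFun_eq_adjugate, hOf x, hml, hc]
      ring
    have step1 : (∑ m : Fin n, ∑ l : Fin n, ∑ j : Fin (n + 2),
          c j * (Stmt15.adjFun (Stmt15.nodeR n j) l m (hG x) * hG x m l))
        = ∑ m : Fin n, ∑ j : Fin (n + 2), ∑ l : Fin n,
            c j * (Stmt15.adjFun (Stmt15.nodeR n j) l m (hG x) * hG x m l) :=
      Finset.sum_congr rfl fun m _ => Finset.sum_comm
    have step2 : (∑ m : Fin n, ∑ j : Fin (n + 2), ∑ l : Fin n,
            c j * (Stmt15.adjFun (Stmt15.nodeR n j) l m (hG x) * hG x m l))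
        = ∑ j : Fin (n + 2), ∑ m : Fin n, ∑ l : Fin n,
            c j * (Stmt15.adjFun (Stmt15.nodeR n j) l m (hG x) * hG x m l) :=
      Finset.sum_comm
    have step3 : (∑ j : Fin (n + 2), ∑ m : Fin n, ∑ l : Fin n,
            c j * (Stmt15.adjFun (Stmt15.nodeR n j) l m (hG x) * hG x m l))
        = ∑ j : Fin (n + 2), ∑ l : Fin n, ∑ m : Fin n,
            c j * (Stmt15.adjFun (Stmt15.nodeR n j) l m (hG x) * hG x m l) :=
      Finset.sum_congr rfl fun j _ => Finset.sum_comm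
    rw [step1, step2, step3, step4]
    exact (Stmt15.keyId (hessMat u x) hk).symm
  -- put everything together
  calc ∑ m : Fin n, fderiv ℝ
        (fun y => ∑ l : Fin n, esymmEntryDeriv k l m (hessMat u y) * fderiv ℝ u y (E l))
        x (E m)
      = ∑ m : Fin n, ∑ l : Fin n, ∑ j : Fin (n + 2),
          c j * (Stmt15.adjFun (Stmt15.nodeR n j) l m (hG x) * hG x m l
            + g l x * (fderiv ℝ (Stmt15.adjFun (Stmt15.nodeR n j) l m) (hG x) (S m))) := by
        refine Finset.sum_congr rfl fun m _ => ?_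
        rw [hrew m]
        exact hfd_term m
    _ = (∑ m : Fin n, ∑ l : Fin n, ∑ j : Fin (n + 2),
          c j * (Stmt15.adjFun (Stmt15.nodeR n j) l m (hG x) * hG x m l))
        + (∑ m : Fin n, ∑ l : Fin n, ∑ j : Fin (n + 2),
          c j * (g l x * (fderiv ℝ (Stmt15.adjFun (Stmt15.nodeR n j) l m) (hG x) (S m)))) := by
        rw [← Finset.sum_add_distrib]
        refine Finset.sum_congr rfl fun m _ => ?_
        rw [← Finset.sum_add_distrib]
        refine Finset.sum_congr rfl fun l _ => ?_
        rw [← Finset.sum_add_distrib]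
        refine Finset.sum_congr rfl fun j _ => ?_
        ring
    _ = (k : ℝ) * esymmMat (hessMat u x) k + 0 := by
        rw [hT2]
        congr 1
        -- the third-derivative part vanishes
        calc (∑ m : Fin n, ∑ l : Fin n, ∑ j : Fin (n + 2),
              c j * (g l x * (fderiv ℝ (Stmt15.adjFun (Stmt15.nodeR n j) l m) (hG x) (S m))))
            = ∑ l : Fin n, ∑ m : Fin n, ∑ j : Fin (n + 2),
              c j * (g l x * (fderiv ℝ (Stmt15.adjFun (Stmt15.nodeR n j) l m) (hG x) (S m))) :=
              Finset.sum_comm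
          _ = ∑ l : Fin n, ∑ j : Fin (n + 2), ∑ m : Fin n,
              c j * (g l x * (fderiv ℝ (Stmt15.adjFun (Stmt15.nodeR n j) l m) (hG x) (S m))) :=
              Finset.sum_congr rfl fun l _ => Finset.sum_comm
          _ = ∑ l : Fin n, ∑ j : Fin (n + 2), (c j * g l x) *
              (∑ m : Fin n, fderiv ℝ (Stmt15.adjFun (Stmt15.nodeR n j) l m) (hG x) (S m)) := by
              refine Finset.sum_congr rfl fun l _ => Finset.sum_congr rfl fun j _ => ?_
              rw [Finset.mul_sum]
              refine Finset.sum_congr rfl fun m _ => ?_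
              ring
          _ = 0 := by
              refine Finset.sum_eq_zero fun l _ => Finset.sum_eq_zero fun j _ => ?_
              rw [hT1 j l, mul_zero]
    _ = (k : ℝ) * esymmMat (hessMat u x) k := by rw [add_zero]
end
end
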